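/- arXiv:1507.01776 — 3 statements merged into one kernel-verified Lean document; each statement's English description precedes it below -/
import Mathlib

section
/- Let D be a finite set and R ⊆ D^n a nonempty n-ary relation, and let 𝒟 = 𝒟(R) be the digraph constructed from R. Then R is a rigid core (i.e., the identity map on D is the only unary polymorphism of R) if and only if 𝒟 is a rigid core (i.e., the identity map on V^𝒟 is the only endomorphism of 𝒟). -/
def Bdirs (b : Bool) : List Bool := if b then [true] else [true, false, true]
def tdirs (L : List Bool) : List Bool := (L.flatMap Bdirs) ++ [true]
lemma tdirs_cons (b : Bool) (L : List Bool) :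
    tdirs (b :: L) = Bdirs b ++ tdirs L := by
  simp [tdirs, List.flatMap_cons, List.append_assoc]
lemma tdirs_cons_true (L : List Bool) : tdirs (true :: L) = true :: tdirs L := by
  simp [tdirs_cons, Bdirs]
lemma tdirs_cons_false (L : List Bool) :
    tdirs (false :: L) = true :: false :: true :: tdirs L := by
  simp [tdirs_cons, Bdirs]
lemma tdirs_length_pos (L : List Bool) : 0 < (tdirs L).length := by simp [tdirs]

def lvl (ds : List Bool) : ℕ → ℤ
  | 0 => 0
  | (j+1) => lvl ds j + (match ds[j]? with
      | some true => 1 | some false => -1 | none => 0)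

lemma lvl_cons (x : Bool) (t : List Bool) (k : ℕ) :
    lvl (x :: t) (k+1) = (if x = true then 1 else -1) + lvl t k := by
  induction k with
  | zero => cases x <;> simp [lvl]
  | succ k ih =>
      rw [lvl, ih, lvl]
      rw [List.getElem?_cons_succ]
      ring

lemma lvl_cons_true (t : List Bool) (k : ℕ) : lvl (true :: t) (k+1) = 1 + lvl t k := by
  rw [lvl_cons]; simp

lemma lvl_cons_false (t : List Bool) (k : ℕ) : lvl (false :: t) (k+1) = -1 + lvl t k := by
  rw [lvl_cons]; simp

lemma lvl_tdirs_bound (L : List Bool) :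
    (∀ j, j < (tdirs L).length → 0 ≤ lvl (tdirs L) j ∧ lvl (tdirs L) j ≤ L.length) ∧
      lvl (tdirs L) (tdirs L).length = L.length + 1 := by
  induction L with
  | nil =>
    constructor
    · intro j hj
      have : j = 0 := by simpa [tdirs] using hj
      subst this; simp [lvl]
    · simp [tdirs, lvl]
  | cons b L ih =>
    cases b with
    | true =>
      rw [tdirs_cons_true]
      constructor
      · intro j hj
        simp only [List.length_cons] at hj ⊢
        match j with
        | 0 => norm_num [lvl]; try positivity
        | (k+1) =>
          rw [lvl_cons_true]
          have := ih.1 k (by omega)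
          push_cast
          omega
      · simp only [List.length_cons]
        rw [lvl_cons_true, ih.2]
        push_cast; ring
    | false =>
      rw [tdirs_cons_false]
      constructor
      · intro j hj
        simp only [List.length_cons] at hj ⊢
        match j with
        | 0 => norm_num [lvl]; try positivity
        | 1 => rw [lvl_cons_true]; norm_num [lvl]; try positivity
        | 2 => rw [lvl_cons_true, lvl_cons_false]; norm_num [lvl]; try positivity
        | (k+3) =>
          rw [lvl_cons_true, lvl_cons_false, lvl_cons_true]
          have := ih.1 k (by omega)
          push_cast
          omega
      · simp only [List.length_cons]
        rw [lvl_cons_true, lvl_cons_false, lvl_cons_true, ih.2]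
        push_cast; ring

lemma tdirs_get0 (L : List Bool) : (tdirs L)[0]? = some true := by
  cases L with
  | nil => rfl
  | cons b L => cases b <;> simp [tdirs_cons_true, tdirs_cons_false]

def nedge (ds : List Bool) (x y : ℕ) : Prop :=
  (ds[x]? = some true ∧ y = x + 1) ∨ (ds[y]? = some false ∧ x = y + 1)

def compat (ds ds' : List Bool) (p : ℕ → ℕ) : Prop :=
  ∀ i, (ds[i]? = some true → nedge ds' (p i) (p (i+1))) ∧
       (ds[i]? = some false → nedge ds' (p (i+1)) (p i))

def noDown (ds' : List Bool) (q : ℕ) : Prop := ∀ k, nedge ds' q k → k = q + 1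

lemma noDown_intro {ds' : List Bool} {q : ℕ}
    (h : ∀ m, q = m + 1 → ds'[m]? ≠ some false) : noDown ds' q := by
  intro k hk
  rcases hk with ⟨_, rfl⟩ | ⟨hg, hx⟩
  · rfl
  · exact absurd hg (h k hx)

lemma forced_up {ds' : List Bool} {q m : ℕ} (hq : noDown ds' q) (h : nedge ds' q m) :
    m = q + 1 ∧ ds'[q]? = some true := by
  have hm := hq _ h
  subst hm
  refine ⟨rfl, ?_⟩
  rcases h with ⟨hg, _⟩ | ⟨hg, hx⟩
  · exact hg
  · omega

lemma main_walk : ∀ (L L' : List Bool), L.length = L'.length →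
    ∀ (ds ds' : List Bool) (p : ℕ → ℕ) (a a' : ℕ),
    ds.drop a = tdirs L → ds'.drop a' = tdirs L' →
    compat ds ds' p → noDown ds' a' → p a = a' →
    (∀ i : ℕ, L[i]? = some true → L'[i]? = some true) ∧
    (L = L' → ∀ j, a ≤ j → j ≤ a + (tdirs L).length → p j = j - a + a') := by
  intro L
  induction L with
  | nil =>
    intro L' hlen ds ds' p a a' hd hd' hc hq hpa
    have hL' : L' = [] := List.length_eq_zero_iff.mp hlen.symm
    subst hL'
    have hg : ∀ k, ds[a+k]? = (tdirs ([] : List Bool))[k]? := fun k => by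
      rw [← List.getElem?_drop, hd]
    constructor
    · intro i h; simpa using h
    · intro _ j haj hj
      have hlen1 : (tdirs ([] : List Bool)).length = 1 := rfl
      rw [hlen1] at hj
      have hds : ds[a]? = some true := by
        have := hg 0; rw [tdirs_get0] at this; simpa using this
      have hst := (forced_up hq (hpa ▸ (hc a).1 hds)).1
      rcases (by omega : j = a ∨ j = a + 1) with rfl | rfl
      · omega
      · omega
  | cons b L₂ ih =>
    intro L' hlen ds ds' p a a' hd hd' hc hq hpa
    obtain ⟨b', L₂', rfl⟩ : ∃ b' L₂', L' = b' :: L₂' := by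
      cases L' with
      | nil => simp at hlen
      | cons x xs => exact ⟨x, xs, rfl⟩
    have hlen₂ : L₂.length = L₂'.length := by simpa using hlen
    have hg : ∀ k : ℕ, ds[a+k]? = (tdirs (b :: L₂))[k]? := fun k => by
      rw [← List.getElem?_drop, hd]
    have hg' : ∀ k : ℕ, ds'[a'+k]? = (tdirs (b' :: L₂'))[k]? := fun k => by
      rw [← List.getElem?_drop, hd']
    have hds0 : ds[a]? = some true := by
      have := hg 0; rw [tdirs_get0] at this; simpa using this
    have h1 := forced_up hq (hpa ▸ (hc a).1 hds0)
    cases b with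
    | true =>
      have hds1 : ds[a+1]? = some true := by
        have := hg 1; rw [tdirs_cons_true] at this; rw [this]
        simpa using tdirs_get0 L₂
      have step1 := (hc (a+1)).1 hds1
      rw [h1.1, show a+1+1 = a+2 from rfl] at step1
      cases b' with
      | false =>
        exfalso
        have hds'1 : ds'[a'+1]? = some false := by
          have := hg' 1; rw [tdirs_cons_false] at this; rw [this]; simp
        rcases step1 with ⟨hgt, _⟩ | ⟨hgf, he⟩
        · rw [hds'1] at hgt; simp at hgt
        · have : p (a+2) = a' := by omega
          rw [this, h1.2] at hgf; simp at hgf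
      | true =>
        have hd₂ : ds.drop (a+1) = tdirs L₂ := by
          rw [← (List.drop_drop : List.drop 1 (List.drop a ds) = _), hd, tdirs_cons_true]; rfl
        have hd₂' : ds'.drop (a'+1) = tdirs L₂' := by
          rw [← (List.drop_drop : List.drop 1 (List.drop a' ds') = _), hd', tdirs_cons_true]; rfl
        have hq₂ : noDown ds' (a'+1) := by
          refine noDown_intro fun m hm => ?_
          have : m = a' := by omega
          subst this; rw [h1.2]; simp
        obtain ⟨ihs, ihid⟩ := ih L₂' hlen₂ ds ds' p (a+1) (a'+1) hd₂ hd₂' hc hq₂ h1.1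
        constructor
        · intro i hi
          cases i with
          | zero => simp
          | succ k => simp only [List.getElem?_cons_succ] at hi ⊢; exact ihs k hi
        · intro hLL j haj hj
          have hL₂ : L₂ = L₂' := (List.cons.injEq _ _ _ _ ▸ hLL).2
          rw [tdirs_cons_true] at hj
          simp only [List.length_cons] at hj
          rcases (by omega : j = a ∨ a + 1 ≤ j) with rfl | hge
          · omega
          · have := ihid hL₂ j hge (by omega)
            omega
    | false =>
      have hds1 : ds[a+1]? = some false := by
        have := hg 1; rw [tdirs_cons_false] at this; rw [this]; simp
      have hds2 : ds[a+2]? = some true := by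
        have := hg 2; rw [tdirs_cons_false] at this; rw [this]; simp
      have hds3 : ds[a+3]? = some true := by
        have := hg 3; rw [tdirs_cons_false] at this; rw [this]
        simpa using tdirs_get0 L₂
      have step1 := (hc (a+1)).2 hds1
      rw [h1.1, show a+1+1 = a+2 from rfl] at step1
      cases b' with
      | true =>
        have hds'1 : ds'[a'+1]? = some true := by
          have := hg' 1; rw [tdirs_cons_true] at this; rw [this]
          simpa using tdirs_get0 L₂'
        have hp2 : p (a+2) = a' := by
          rcases step1 with ⟨hgt, he⟩ | ⟨hgf, he⟩
          · omega
          · rw [hds'1] at hgf; simp at hgf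
        have step2 := (hc (a+2)).1 hds2
        rw [hp2, show a+2+1 = a+3 from rfl] at step2
        have hp3 := (forced_up hq step2).1
        have hd₂ : ds.drop (a+3) = tdirs L₂ := by
          rw [← (List.drop_drop : List.drop 3 (List.drop a ds) = _), hd, tdirs_cons_false]; rfl
        have hd₂' : ds'.drop (a'+1) = tdirs L₂' := by
          rw [← (List.drop_drop : List.drop 1 (List.drop a' ds') = _), hd', tdirs_cons_true]; rfl
        have hq₂ : noDown ds' (a'+1) := by
          refine noDown_intro fun m hm => ?_
          have : m = a' := by omega
          subst this; rw [h1.2]; simp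
        obtain ⟨ihs, ihid⟩ := ih L₂' hlen₂ ds ds' p (a+3) (a'+1) hd₂ hd₂' hc hq₂ hp3
        constructor
        · intro i hi
          cases i with
          | zero => simp at hi
          | succ k => simp only [List.getElem?_cons_succ] at hi ⊢; exact ihs k hi
        · intro hLL
          exact absurd ((List.cons.injEq _ _ _ _ ▸ hLL).1) (by simp)
      | false =>
        have hds'1 : ds'[a'+1]? = some false := by
          have := hg' 1; rw [tdirs_cons_false] at this; rw [this]; simp
        have hds'2 : ds'[a'+2]? = some true := by
          have := hg' 2; rw [tdirs_cons_false] at this; rw [this]; simp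
        have hp2 : p (a+2) = a' + 2 := by
          rcases step1 with ⟨hgt, he⟩ | ⟨hgf, he⟩
          · exfalso
            have hp2' : p (a+2) = a' := by omega
            have step2 := (hc (a+2)).1 hds2
            rw [hp2', show a+2+1 = a+3 from rfl] at step2
            have hp3 := (forced_up hq step2).1
            have step3 := (hc (a+3)).1 hds3
            rw [hp3, show a+3+1 = a+4 from rfl] at step3
            rcases step3 with ⟨hgt2, _⟩ | ⟨hgf2, he2⟩
            · rw [hds'1] at hgt2; simp at hgt2
            · have : p (a+4) = a' := by omega
              rw [this, h1.2] at hgf2; simp at hgf2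
          · omega
        have step2 := (hc (a+2)).1 hds2
        rw [hp2, show a+2+1 = a+3 from rfl] at step2
        have hp3 : p (a+3) = a' + 3 := by
          rcases step2 with ⟨hgt, he⟩ | ⟨hgf, he⟩
          · rw [hds'2] at hgt; omega
          · exfalso
            have hp3' : p (a+3) = a' + 1 := by omega
            have step3 := (hc (a+3)).1 hds3
            rw [hp3', show a+3+1 = a+4 from rfl] at step3
            rcases step3 with ⟨hgt2, _⟩ | ⟨hgf2, he2⟩
            · rw [hds'1] at hgt2; simp at hgt2
            · have : p (a+4) = a' := by omega
              rw [this, h1.2] at hgf2; simp at hgf2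
        have hd₂ : ds.drop (a+3) = tdirs L₂ := by
          rw [← (List.drop_drop : List.drop 3 (List.drop a ds) = _), hd, tdirs_cons_false]; rfl
        have hd₂' : ds'.drop (a'+3) = tdirs L₂' := by
          rw [← (List.drop_drop : List.drop 3 (List.drop a' ds') = _), hd', tdirs_cons_false]; rfl
        have hq₂ : noDown ds' (a'+3) := by
          refine noDown_intro fun m hm => ?_
          have : m = a' + 2 := by omega
          subst this; rw [hds'2]; simp
        obtain ⟨ihs, ihid⟩ := ih L₂' hlen₂ ds ds' p (a+3) (a'+3) hd₂ hd₂' hc hq₂ hp3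
        constructor
        · intro i hi
          cases i with
          | zero => simp at hi
          | succ k => simp only [List.getElem?_cons_succ] at hi ⊢; exact ihs k hi
        · intro hLL j haj hj
          have hL₂ : L₂ = L₂' := (List.cons.injEq _ _ _ _ ▸ hLL).2
          rw [tdirs_cons_false] at hj
          simp only [List.length_cons] at hj
          rcases (by omega : j = a ∨ j = a + 1 ∨ j = a + 2 ∨ a + 3 ≤ j) with rfl | rfl | rfl | hge
          · omega
          · omega
          · omega
          · have := ihid hL₂ j hge (by omega)
            omega

open scoped NNRat

/-- A homomorphism between digraphs given by their edge relations. -/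
def IsDigraphHom {V₁ V₂ : Type*} (E₁ : V₁ → V₁ → Prop) (E₂ : V₂ → V₂ → Prop)
    (h : V₁ → V₂) : Prop :=
  ∀ a b, E₁ a b → E₂ (h a) (h b)

/-- Weak reachability (connectivity by oriented paths) in a digraph. -/
def WeakReach {V : Type*} (E : V → V → Prop) : V → V → Prop :=
  Relation.ReflTransGen fun a b => E a b ∨ E b a

/-- Edge relation of the direct power of a digraph. -/
def powEdge {V : Type*} (k : ℕ) (E : V → V → Prop) :
    (Fin k → V) → (Fin k → V) → Prop :=
  fun c d => ∀ i, E (c i) (d i)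

/-- The directions of the edges of the oriented path `Q_S`: a single edge, then for
each `l` a single edge (if `l ∈ S`) or a zigzag (otherwise), then a single edge. -/
def QDirs (n : ℕ) (S : Finset (Fin n)) : List Bool :=
  true :: (((List.finRange n).flatMap fun l =>
    if l ∈ S then [true] else [true, false, true]) ++ [true])

/-- The edge relation of the oriented path whose edge directions are given by `ds`;
its vertices are `0, …, ds.length`, `0` being initial and `ds.length` terminal. -/
def pathEdge (ds : List Bool) : Fin (ds.length + 1) → Fin (ds.length + 1) → Prop :=
  fun a b => ∃ i : Fin ds.length,
    if ds.get i = true then a = i.castSucc ∧ b = i.succ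
    else a = i.succ ∧ b = i.castSucc

/-- The directions of the path `Q_{{i : d = r i}}` replacing the edge `(d, r)`. -/
def pathDirs {D : Type} [DecidableEq D] {n : ℕ} (d : D) (r : Fin n → D) : List Bool :=
  QDirs n (Finset.univ.filter fun i => d = r i)

/-- Internal vertices of the copies of the paths `Q_{{i : d = r i}}` in `𝒟(R)`. -/
structure InnerVert (D : Type) [DecidableEq D] (n : ℕ) (R : Set (Fin n → D)) where
  d : D
  r : Fin n → D
  hr : r ∈ R
  j : ℕ
  hj0 : 0 < j
  hjlen : j < (pathDirs d r).length

/-- The vertex set of the digraph `𝒟(R)`: base vertices `D`, top vertices `R`, and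
the internal vertices of the connecting oriented paths. -/
def DVert (D : Type) [DecidableEq D] (n : ℕ) (R : Set (Fin n → D)) : Type :=
  D ⊕ ({t : Fin n → D // t ∈ R} ⊕ InnerVert D n R)

/-- The `j`-th vertex of the copy of the path `Q_{{i : d = t i}}` joining `d` to `t`. -/
def pathVert {D : Type} [DecidableEq D] {n : ℕ} {R : Set (Fin n → D)}
    (d : D) (t : Fin n → D) (ht : t ∈ R) (j : ℕ) : DVert D n R :=
  if hj0 : j = 0 then Sum.inl d
  else if hjl : (pathDirs d t).length ≤ j then Sum.inr (Sum.inl ⟨t, ht⟩)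
  else Sum.inr (Sum.inr ⟨d, t, ht, j, Nat.pos_of_ne_zero hj0, not_le.mp hjl⟩)

/-- The edge relation of the digraph `𝒟(R)`. -/
def DEdge {D : Type} [DecidableEq D] {n : ℕ} {R : Set (Fin n → D)} :
    DVert D n R → DVert D n R → Prop :=
  fun a b => ∃ (d : D) (t : Fin n → D) (ht : t ∈ R) (i : ℕ)
      (hi : i < (pathDirs d t).length),
    if (pathDirs d t).get ⟨i, hi⟩ = true then
      a = pathVert d t ht i ∧ b = pathVert d t ht (i + 1)
    else
      a = pathVert d t ht (i + 1) ∧ b = pathVert d t ht i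

/-- A unary polymorphism of an `n`-ary relation `R`. -/
def IsUnaryPolymorphism {D : Type} {n : ℕ} (R : Set (Fin n → D)) (g : D → D) : Prop :=
  ∀ t ∈ R, (fun i => g (t i)) ∈ R

/-- The unary cost function `u` on the vertices of `𝒟(R)` associated to `ρ : R → ℚ≥0`. -/
def uFun {D : Type} [DecidableEq D] {n : ℕ} {R : Set (Fin n → D)}
    (ρ : {t : Fin n → D // t ∈ R} → ℚ≥0) : DVert D n R → ℚ≥0 :=
  fun v => match v with
  | Sum.inl _ => 0
  | Sum.inr (Sum.inl t) => ρ t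
  | Sum.inr (Sum.inr _) => 0



lemma nedge_le {ds : List Bool} {x y : ℕ} (h : nedge ds x y) :
    x ≤ ds.length ∧ y ≤ ds.length := by
  rcases h with ⟨hg, rfl⟩ | ⟨hg, rfl⟩ <;>
    · have := (List.getElem?_eq_some_iff.mp hg).1
      omega

lemma nedge_lvl {ds : List Bool} {x y : ℕ} (h : nedge ds x y) :
    lvl ds y = lvl ds x + 1 := by
  rcases h with ⟨hg, rfl⟩ | ⟨hg, rfl⟩ <;> rw [lvl, hg] <;> norm_num

section Digraph
def LQ (n : ℕ) (S : Finset (Fin n)) : List Bool :=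
  true :: (List.finRange n).map (fun l => decide (l ∈ S))

lemma LQ_length {n : ℕ} (S : Finset (Fin n)) : (LQ n S).length = n + 1 := by
  simp [LQ]

lemma QDirs_eq_tdirs (n : ℕ) (S : Finset (Fin n)) : QDirs n S = tdirs (LQ n S) := by
  have : tdirs (LQ n S) = true ::
      (((List.finRange n).map fun l => decide (l ∈ S)).flatMap Bdirs ++ [true]) := by
    simp [LQ, tdirs, List.flatMap_cons, Bdirs]
  rw [this, QDirs, List.flatMap_map]
  congr 2
  exact congrArg (List.finRange n).flatMap
    (funext fun l => by by_cases h : l ∈ S <;> simp [h, Bdirs, Function.comp])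

lemma tdirs_length_ge (L : List Bool) : L.length + 1 ≤ (tdirs L).length := by
  induction L with
  | nil => simp [tdirs]
  | cons b L ih =>
    rw [tdirs_cons]
    cases b <;> simp [Bdirs] at * <;> omega

variable {D : Type} [DecidableEq D] {n : ℕ} {R : Set (Fin n → D)}

lemma pathDirs_def (d : D) (t : Fin n → D) :
    pathDirs d t = tdirs (LQ n (Finset.univ.filter fun i => d = t i)) :=
  QDirs_eq_tdirs n _

lemma pathDirs_length_ge (d : D) (t : Fin n → D) :
    n + 2 ≤ (pathDirs d t).length := by
  rw [pathDirs_def]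
  have := tdirs_length_ge (LQ n (Finset.univ.filter fun i => d = t i))
  rw [LQ_length] at this
  omega

lemma lvl_pathDirs_last (d : D) (t : Fin n → D) :
    lvl (pathDirs d t) (pathDirs d t).length = (n : ℤ) + 2 := by
  rw [pathDirs_def, (lvl_tdirs_bound _).2, LQ_length]
  push_cast; ring

lemma lvl_pathDirs_interior (d : D) (t : Fin n → D) {j : ℕ} (h0 : 0 < j)
    (hl : j < (pathDirs d t).length) :
    1 ≤ lvl (pathDirs d t) j ∧ lvl (pathDirs d t) j ≤ (n : ℤ) + 1 := by
  rw [pathDirs_def] at hl ⊢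
  set S := Finset.univ.filter fun i => d = t i
  have hLQ : LQ n S = true :: (List.finRange n).map (fun l => decide (l ∈ S)) := rfl
  set M := (List.finRange n).map (fun l => decide (l ∈ S)) with hM
  have hMlen : M.length = n := by simp [hM]
  obtain ⟨k, rfl⟩ : ∃ k, j = k + 1 := ⟨j - 1, by omega⟩
  rw [hLQ, tdirs_cons_true] at hl ⊢
  rw [lvl_cons_true]
  simp only [List.length_cons] at hl
  have := (lvl_tdirs_bound M).1 k (by omega)
  rw [hMlen] at this
  omega

lemma pathVert_zero (d : D) (t : Fin n → D) (ht : t ∈ R) :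
    pathVert d t ht 0 = Sum.inl d := by
  unfold pathVert; exact dif_pos rfl

lemma pathVert_top (d : D) (t : Fin n → D) (ht : t ∈ R) {j : ℕ} (h0 : j ≠ 0)
    (hl : (pathDirs d t).length ≤ j) :
    pathVert d t ht j = Sum.inr (Sum.inl ⟨t, ht⟩) := by
  unfold pathVert; exact (dif_neg h0).trans (dif_pos hl)

lemma pathVert_inner (d : D) (t : Fin n → D) (ht : t ∈ R) {j : ℕ} (h0 : j ≠ 0)
    (hl : ¬ (pathDirs d t).length ≤ j) :
    pathVert d t ht j =
      Sum.inr (Sum.inr ⟨d, t, ht, j, Nat.pos_of_ne_zero h0, lt_of_not_ge hl⟩) := by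
  unfold pathVert; exact (dif_neg h0).trans (dif_neg hl)

lemma pathVert_eq_inl {d : D} {t : Fin n → D} {ht : t ∈ R} {k : ℕ} {x : D}
    (h : pathVert d t ht k = Sum.inl x) : k = 0 ∧ d = x := by
  by_cases h0 : k = 0
  · rw [h0, pathVert_zero] at h
    exact ⟨h0, Sum.inl.inj h⟩
  by_cases hl : (pathDirs d t).length ≤ k
  · rw [pathVert_top d t ht h0 hl] at h; simp at h
  · rw [pathVert_inner d t ht h0 hl] at h; simp at h

lemma pathVert_eq_top {d : D} {t : Fin n → D} {ht : t ∈ R} {k : ℕ}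
    {s : {t : Fin n → D // t ∈ R}}
    (h : pathVert d t ht k = Sum.inr (Sum.inl s)) :
    k ≠ 0 ∧ (pathDirs d t).length ≤ k ∧ s = ⟨t, ht⟩ := by
  by_cases h0 : k = 0
  · rw [h0, pathVert_zero] at h; cases h
  by_cases hl : (pathDirs d t).length ≤ k
  · rw [pathVert_top d t ht h0 hl] at h
    exact ⟨h0, hl, (Sum.inl.inj (Sum.inr.inj h)).symm⟩
  · rw [pathVert_inner d t ht h0 hl] at h
    cases h

lemma pathVert_eq_inner {d : D} {t : Fin n → D} {ht : t ∈ R} {k : ℕ}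
    {iv : InnerVert D n R}
    (h : pathVert d t ht k = Sum.inr (Sum.inr iv)) :
    iv.d = d ∧ iv.r = t ∧ iv.j = k := by
  by_cases h0 : k = 0
  · rw [h0, pathVert_zero] at h; cases h
  by_cases hl : (pathDirs d t).length ≤ k
  · rw [pathVert_top d t ht h0 hl] at h
    cases h
  · rw [pathVert_inner d t ht h0 hl] at h
    have heq := (Sum.inr.inj (Sum.inr.inj h)).symm
    subst heq
    exact ⟨rfl, rfl, rfl⟩

def levelV : DVert D n R → ℤ := fun v =>
  match v with
  | Sum.inl _ => 0
  | Sum.inr (Sum.inl _) => (n : ℤ) + 2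
  | Sum.inr (Sum.inr iv) => lvl (pathDirs iv.d iv.r) iv.j

lemma levelV_pathVert (d : D) (t : Fin n → D) (ht : t ∈ R) {j : ℕ}
    (hj : j ≤ (pathDirs d t).length) :
    levelV (pathVert d t ht j) = lvl (pathDirs d t) j := by
  by_cases h0 : j = 0
  · rw [h0, pathVert_zero]; rfl
  by_cases hl : (pathDirs d t).length ≤ j
  · have : j = (pathDirs d t).length := by omega
    rw [pathVert_top d t ht h0 hl, this, lvl_pathDirs_last]; rfl
  · rw [pathVert_inner d t ht h0 hl]; rfl

lemma nedge_DEdge {d : D} {t : Fin n → D} (ht : t ∈ R) {x y : ℕ}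
    (h : nedge (pathDirs d t) x y) :
    DEdge (pathVert d t ht x) (pathVert d t ht y) := by
  rcases h with ⟨hg, rfl⟩ | ⟨hg, rfl⟩
  · obtain ⟨hx, hgx⟩ := List.getElem?_eq_some_iff.mp hg
    exact ⟨d, t, ht, x, hx,
      by rw [if_pos (show (pathDirs d t).get ⟨x, hx⟩ = true from hgx)]; exact ⟨rfl, rfl⟩⟩
  · obtain ⟨hy, hgy⟩ := List.getElem?_eq_some_iff.mp hg
    exact ⟨d, t, ht, y, hy,
      by rw [if_neg (show ¬ (pathDirs d t).get ⟨y, hy⟩ = true by simp [List.get_eq_getElem, hgy])]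
         exact ⟨rfl, rfl⟩⟩

lemma DEdge_elim {a b : DVert D n R} (h : DEdge a b) :
    ∃ (d : D) (t : Fin n → D) (ht : t ∈ R) (x y : ℕ),
      nedge (pathDirs d t) x y ∧ a = pathVert d t ht x ∧ b = pathVert d t ht y := by
  obtain ⟨d, t, ht, i, hi, hif⟩ := h
  by_cases hg : (pathDirs d t).get ⟨i, hi⟩ = true
  · rw [if_pos hg] at hif
    exact ⟨d, t, ht, i, i+1,
      Or.inl ⟨by rw [List.getElem?_eq_getElem hi]; exact congrArg some hg, rfl⟩,
      hif.1, hif.2⟩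
  · rw [if_neg hg] at hif
    refine ⟨d, t, ht, i+1, i,
      Or.inr ⟨by rw [List.getElem?_eq_getElem hi]; simp at hg; exact congrArg some hg, rfl⟩,
      hif.1, hif.2⟩

lemma DEdge_level {a b : DVert D n R} (h : DEdge a b) :
    levelV b = levelV a + 1 := by
  obtain ⟨d, t, ht, x, y, hne, rfl, rfl⟩ := DEdge_elim h
  have hle := nedge_le hne
  rw [levelV_pathVert d t ht hle.1, levelV_pathVert d t ht hle.2]
  exact nedge_lvl hne

lemma levelV_nonneg (v : DVert D n R) : 0 ≤ levelV v := by
  match v with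
  | Sum.inl _ => exact le_refl 0
  | Sum.inr (Sum.inl _) => show (0:ℤ) ≤ (n:ℤ) + 2; positivity
  | Sum.inr (Sum.inr iv) =>
    have := (lvl_pathDirs_interior iv.d iv.r iv.hj0 iv.hjlen).1
    show (0:ℤ) ≤ lvl (pathDirs iv.d iv.r) iv.j
    omega

lemma levelV_le (v : DVert D n R) : levelV v ≤ (n : ℤ) + 2 := by
  match v with
  | Sum.inl _ => show (0:ℤ) ≤ (n:ℤ) + 2; positivity
  | Sum.inr (Sum.inl _) => exact le_refl _
  | Sum.inr (Sum.inr iv) =>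
    have := (lvl_pathDirs_interior iv.d iv.r iv.hj0 iv.hjlen).2
    show lvl (pathDirs iv.d iv.r) iv.j ≤ (n:ℤ) + 2
    omega

lemma eq_inl_of_level {v : DVert D n R} (h : levelV v = 0) : ∃ d, v = Sum.inl d := by
  match v with
  | Sum.inl d => exact ⟨d, rfl⟩
  | Sum.inr (Sum.inl s) =>
    exfalso; have : (n:ℤ) + 2 = 0 := h; omega
  | Sum.inr (Sum.inr iv) =>
    exfalso
    have := (lvl_pathDirs_interior iv.d iv.r iv.hj0 iv.hjlen).1
    have h' : lvl (pathDirs iv.d iv.r) iv.j = 0 := h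
    omega

lemma eq_top_of_level {v : DVert D n R} (h : levelV v = (n:ℤ) + 2) :
    ∃ s, v = Sum.inr (Sum.inl s) := by
  match v with
  | Sum.inl d => exfalso; have : (0:ℤ) = (n:ℤ) + 2 := h; omega
  | Sum.inr (Sum.inl s) => exact ⟨s, rfl⟩
  | Sum.inr (Sum.inr iv) =>
    exfalso
    have := (lvl_pathDirs_interior iv.d iv.r iv.hj0 iv.hjlen).2
    have h' : lvl (pathDirs iv.d iv.r) iv.j = (n:ℤ) + 2 := h
    omega

lemma eq_inner_of_level {v : DVert D n R} (h0 : levelV v ≠ 0)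
    (h2 : levelV v ≠ (n:ℤ) + 2) : ∃ iv, v = Sum.inr (Sum.inr iv) := by
  match v with
  | Sum.inl d => exact absurd rfl h0
  | Sum.inr (Sum.inl s) => exact absurd rfl h2
  | Sum.inr (Sum.inr iv) => exact ⟨iv, rfl⟩

end Digraph

section Walk

lemma tdirs_get0' (L : List Bool) : (tdirs L)[0]? = some true := by
  cases L with
  | nil => rfl
  | cons b L => cases b <;> simp [tdirs_cons_true, tdirs_cons_false]

variable {D : Type} [DecidableEq D] {n : ℕ} {R : Set (Fin n → D)}

lemma pathDirs_get0 (d : D) (t : Fin n → D) : (pathDirs d t)[0]? = some true := by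
  rw [pathDirs_def]; exact tdirs_get0' _

lemma pathVert_inj {d : D} {t : Fin n → D} {ht : t ∈ R} {x y : ℕ}
    (hx : x ≤ (pathDirs d t).length) (hy : y ≤ (pathDirs d t).length)
    (h : pathVert d t ht x = pathVert d t ht y) : x = y := by
  by_cases h0 : x = 0
  · subst h0
    rw [pathVert_zero] at h
    exact (pathVert_eq_inl h.symm).1.symm
  by_cases hl : (pathDirs d t).length ≤ x
  · rw [pathVert_top d t ht h0 hl] at h
    have := (pathVert_eq_top h.symm).2.1
    omega
  · rw [pathVert_inner d t ht h0 hl] at h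
    exact (pathVert_eq_inner h.symm).2.2

/-- position of a vertex in a copy whose base vertex is `d'` -/
def vpos (d' : D) : DVert D n R → ℕ := fun v =>
  match v with
  | Sum.inl _ => 0
  | Sum.inr (Sum.inl s) => (pathDirs d' s.1).length
  | Sum.inr (Sum.inr iv) => iv.j

lemma copy_walk {h : DVert D n R → DVert D n R} (hhom : IsDigraphHom DEdge DEdge h)
    (hlev : ∀ v, levelV (h v) = levelV v) {g : D → D}
    (hgd : ∀ d, h (Sum.inl d) = Sum.inl (g d))
    (d : D) (t : Fin n → D) (ht : t ∈ R) :
    ∃ (t' : Fin n → D) (ht' : t' ∈ R) (p : ℕ → ℕ),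
      h (Sum.inr (Sum.inl ⟨t, ht⟩)) = Sum.inr (Sum.inl ⟨t', ht'⟩) ∧
      compat (pathDirs d t) (pathDirs (g d) t') p ∧ p 0 = 0 ∧
      p (pathDirs d t).length = (pathDirs (g d) t').length ∧
      (∀ j, j ≤ (pathDirs d t).length →
        h (pathVert d t ht j) = pathVert (g d) t' ht' (p j)) := by
  have hlen3 : n + 2 ≤ (pathDirs d t).length := pathDirs_length_ge d t
  set ds := pathDirs d t with hds
  set len := ds.length with hlen
  set w : ℕ → DVert D n R := fun j => h (pathVert d t ht j) with hw
  have hwlev : ∀ j, j ≤ len → levelV (w j) = lvl ds j := fun j hj => by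
    show levelV (h _) = _
    rw [hlev, levelV_pathVert d t ht hj]
  have hinner : ∀ j, 0 < j → j < len → ∃ iv, w j = Sum.inr (Sum.inr iv) := by
    intro j h0 hl
    have hb := lvl_pathDirs_interior d t h0 hl
    rw [← hds] at hb
    refine eq_inner_of_level ?_ ?_ <;> rw [hwlev j (le_of_lt hl)] <;> omega
  have hw0 : w 0 = Sum.inl (g d) := by
    show h (pathVert d t ht 0) = _
    rw [pathVert_zero]; exact hgd d
  have hwtop : w len = h (Sum.inr (Sum.inl ⟨t, ht⟩)) := by
    show h (pathVert d t ht len) = _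
    rw [pathVert_top d t ht (j := len) (by omega) (le_refl _)]
  have hedge : ∀ j, j < len →
      (ds[j]? = some true → DEdge (w j) (w (j+1))) ∧
      (ds[j]? = some false → DEdge (w (j+1)) (w j)) := by
    intro j hj
    exact ⟨fun hb => hhom _ _ (nedge_DEdge ht (Or.inl ⟨hb, rfl⟩)),
           fun hb => hhom _ _ (nedge_DEdge ht (Or.inr ⟨hb, rfl⟩))⟩
  have h1lt : 1 < len := by omega
  obtain ⟨iv₁, hiv₁⟩ := hinner 1 one_pos h1lt
  have hedge01 : DEdge (w 0) (w 1) := (hedge 0 (by omega)).1 (pathDirs_get0 d t)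
  obtain ⟨d₂, t₂, ht₂, x₂, y₂, hne₂, hax₂, hby₂⟩ := DEdge_elim hedge01
  set t₁ := iv₁.r with ht₁def
  have ht₁mem : t₁ ∈ R := iv₁.hr
  set ds' := pathDirs (g d) t₁ with hds'
  set len' := ds'.length with hlen'
  have hlen3' : n + 2 ≤ len' := pathDirs_length_ge (g d) t₁
  set p : ℕ → ℕ := fun j => vpos (g d) (w j) with hp
  have hp0 : p 0 = 0 := by show vpos (g d) (w 0) = 0; rw [hw0]; rfl
  -- pinning lemma for inner positions
  have pin : ∀ i, 0 < i → i < len →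
      ∀ {d₃ : D} {t₃ : Fin n → D} {ht₃ : t₃ ∈ R} {u : ℕ},
      w i = pathVert d₃ t₃ ht₃ u → w i = pathVert (g d) t₁ ht₁mem (p i) →
      d₃ = g d ∧ t₃ = t₁ ∧ u = p i := by
    intro i h0 hl d₃ t₃ ht₃ u h1 h2
    obtain ⟨ivi, hivi⟩ := hinner i h0 hl
    obtain ⟨e1, e2, e3⟩ := pathVert_eq_inner (h1 ▸ hivi : pathVert d₃ t₃ ht₃ u = _)
    obtain ⟨f1, f2, f3⟩ := pathVert_eq_inner (h2 ▸ hivi : pathVert (g d) t₁ ht₁mem (p i) = _)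
    exact ⟨e1 ▸ f1, e2 ▸ f2, by omega⟩
  -- master claim
  have master : ∀ j, j ≤ len →
      w j = pathVert (g d) t₁ ht₁mem (p j) ∧ p j ≤ len' := by
    intro j
    induction j with
    | zero =>
      intro _
      rw [hp0, hw0, pathVert_zero]
      exact ⟨rfl, by omega⟩
    | succ j ih =>
      intro hj1
      have hj : j < len := by omega
      obtain ⟨hmj, hmjb⟩ := ih (by omega)
      have hsome : ds[j]? = some (ds[j]'hj) := List.getElem?_eq_getElem hj
      have key : ∃ (d₃ : D) (t₃ : Fin n → D) (ht₃ : t₃ ∈ R) (u v : ℕ),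
          w j = pathVert d₃ t₃ ht₃ u ∧ w (j+1) = pathVert d₃ t₃ ht₃ v ∧
          v ≤ (pathDirs d₃ t₃).length := by
        cases hbv : ds[j]'hj
        · rw [hbv] at hsome
          obtain ⟨d₃, t₃, ht₃, u, v, hne₃, ha₃, hb₃⟩ :=
            DEdge_elim ((hedge j hj).2 hsome)
          exact ⟨d₃, t₃, ht₃, v, u, hb₃, ha₃, (nedge_le hne₃).1⟩
        · rw [hbv] at hsome
          obtain ⟨d₃, t₃, ht₃, u, v, hne₃, ha₃, hb₃⟩ :=
            DEdge_elim ((hedge j hj).1 hsome)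
          exact ⟨d₃, t₃, ht₃, u, v, ha₃, hb₃, (nedge_le hne₃).2⟩
      obtain ⟨d₃, t₃, ht₃, u, v, hju, hjv, hvle⟩ := key
      have hpin : d₃ = g d ∧ t₃ = t₁ := by
        rcases Nat.eq_zero_or_pos j with rfl | hjpos
        · have h10 := pathVert_eq_inl (hju ▸ hw0 : pathVert d₃ t₃ ht₃ u = _)
          have h11 := pathVert_eq_inner (hjv ▸ hiv₁ : pathVert d₃ t₃ ht₃ v = _)
          exact ⟨h10.2, h11.2.1.symm⟩
        · obtain ⟨e1, e2, _⟩ := pin j hjpos hj hju hmj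
          exact ⟨e1, e2⟩
      obtain ⟨rfl, rfl⟩ := hpin
      rw [← hlen'] at hvle
      -- now w (j+1) = pathVert (g d) t₁ _ v
      by_cases htop : j + 1 = len
      · -- top end
        have hlv : levelV (w (j+1)) = (n:ℤ) + 2 := by
          rw [hwlev (j+1) hj1, htop, hlen, hds, lvl_pathDirs_last]
        obtain ⟨s, hs⟩ := eq_top_of_level hlv
        obtain ⟨hv0, hvge, hseq⟩ := pathVert_eq_top (hjv ▸ hs : pathVert (g d) t₁ ht₃ v = _)
        rw [← hlen'] at hvge
        have hveq : v = len' := by omega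
        have hpj1 : p (j+1) = len' := by
          show vpos (g d) (w (j+1)) = len'
          rw [hs, hseq]
          rfl
        rw [hpj1, hjv, hveq]
        exact ⟨rfl, le_refl _⟩
      · -- inner
        obtain ⟨iv2, hiv2⟩ := hinner (j+1) (by omega) (by omega)
        obtain ⟨e1, e2, e3⟩ := pathVert_eq_inner (hjv ▸ hiv2 : pathVert (g d) t₁ ht₃ v = _)
        have hpj1 : p (j+1) = v := by
          show vpos (g d) (w (j+1)) = v
          rw [hiv2]
          show iv2.j = v
          omega
        rw [hpj1, hjv]
        exact ⟨rfl, hvle⟩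
  -- identify t'
  have hmtop := master len (le_refl _)
  have hlvtop : levelV (w len) = (n:ℤ) + 2 := by
    rw [hwlev len (le_refl _), hlen, hds, lvl_pathDirs_last]
  obtain ⟨s, hs⟩ := eq_top_of_level hlvtop
  obtain ⟨hpl0, hplge, hseq⟩ :=
    pathVert_eq_top (hmtop.1 ▸ hs : pathVert (g d) t₁ ht₁mem (p len) = _)
  rw [← hlen'] at hplge
  have hplen : p len = len' := by omega
  -- compat
  have hcompat : compat ds ds' p := by
    intro i
    constructor
    · intro hb
      have hilt : i < len := (List.getElem?_eq_some_iff.mp hb).1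
      obtain ⟨d₃, t₃, ht₃, u, v, hne₃, ha₃, hb₃⟩ := DEdge_elim ((hedge i hilt).1 hb)
      have hule := (nedge_le hne₃).1
      have hvle := (nedge_le hne₃).2
      have hpin : d₃ = g d ∧ t₃ = t₁ ∧ u = p i := by
        rcases Nat.eq_zero_or_pos i with rfl | hipos
        · have h10 := pathVert_eq_inl (ha₃ ▸ hw0 : pathVert d₃ t₃ ht₃ u = _)
          have h11 := pathVert_eq_inner (hb₃ ▸ hiv₁ : pathVert d₃ t₃ ht₃ v = _)
          exact ⟨h10.2, h11.2.1.symm, by rw [hp0, h10.1]⟩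
        · exact pin i hipos hilt ha₃ (master i (le_of_lt hilt)).1
      obtain ⟨rfl, rfl, rfl⟩ := hpin
      rw [← hlen'] at hvle
      have hv : v = p (i+1) :=
        pathVert_inj hvle (master (i+1) hilt).2
          (hb₃ ▸ (master (i+1) hilt).1 : pathVert (g d) t₁ ht₃ v = _)
      rw [← hv]
      exact hne₃
    · intro hb
      have hilt : i < len := (List.getElem?_eq_some_iff.mp hb).1
      obtain ⟨d₃, t₃, ht₃, u, v, hne₃, ha₃, hb₃⟩ := DEdge_elim ((hedge i hilt).2 hb)
      have hule := (nedge_le hne₃).1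
      have hvle := (nedge_le hne₃).2
      -- here w (i+1) = pathVert ... u  and  w i = pathVert ... v
      have hpin : d₃ = g d ∧ t₃ = t₁ ∧ v = p i := by
        rcases Nat.eq_zero_or_pos i with rfl | hipos
        · have h10 := pathVert_eq_inl (hb₃ ▸ hw0 : pathVert d₃ t₃ ht₃ v = _)
          have h11 := pathVert_eq_inner (ha₃ ▸ hiv₁ : pathVert d₃ t₃ ht₃ u = _)
          exact ⟨h10.2, h11.2.1.symm, by rw [hp0, h10.1]⟩
        · exact pin i hipos hilt hb₃ (master i (le_of_lt hilt)).1
      obtain ⟨rfl, rfl, rfl⟩ := hpin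
      rw [← hlen'] at hule
      have hu : u = p (i+1) :=
        pathVert_inj hule (master (i+1) hilt).2
          (ha₃ ▸ (master (i+1) hilt).1 : pathVert (g d) t₁ ht₃ u = _)
      rw [← hu]
      exact hne₃
  refine ⟨t₁, ht₁mem, p, ?_, hcompat, hp0, hplen, ?_⟩
  · rw [← hwtop, hs, hseq]
  · intro j hj
    exact (master j hj).1
section Backward

lemma nedge_cons_shift {c : Bool} {t : List Bool} {x y : ℕ} (h : nedge t x y) :
    nedge (c :: t) (x+1) (y+1) := by
  rcases h with ⟨hg, rfl⟩ | ⟨hg, rfl⟩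
  · exact Or.inl ⟨by simpa using hg, rfl⟩
  · exact Or.inr ⟨by simpa using hg, rfl⟩

lemma exists_walkmap : ∀ (L L' : List Bool), L.length = L'.length →
    (∀ i : ℕ, L[i]? = some true → L'[i]? = some true) →
    ∃ ψ : ℕ → ℕ, ψ 0 = 0 ∧ ψ (tdirs L).length = (tdirs L').length ∧
      compat (tdirs L) (tdirs L') ψ := by
  intro L
  induction L with
  | nil =>
    intro L' hlen _
    have hL' : L' = [] := List.length_eq_zero_iff.mp hlen.symm
    subst hL'
    refine ⟨id, rfl, rfl, fun i => ?_⟩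
    match i with
    | 0 => exact ⟨fun _ => Or.inl ⟨rfl, rfl⟩, fun hf => by simp [tdirs] at hf⟩
    | (k+1) =>
      constructor <;> · intro hf; rw [show tdirs [] = [true] from rfl] at hf; simp at hf
  | cons b L₂ ih =>
    intro L' hlen hsub
    obtain ⟨b', L₂', rfl⟩ : ∃ b' L₂', L' = b' :: L₂' := by
      cases L' with
      | nil => simp at hlen
      | cons x xs => exact ⟨x, xs, rfl⟩
    have hlen₂ : L₂.length = L₂'.length := by simpa using hlen
    have hsub₂ : ∀ i : ℕ, L₂[i]? = some true → L₂'[i]? = some true := fun i hi => by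
      have := hsub (i+1) (by simpa using hi)
      simpa using this
    obtain ⟨ψ₂, hψ0, hψlen, hψc⟩ := ih L₂' hlen₂ hsub₂
    cases b with
    | true =>
      have hb' : b' = true := by
        have := hsub 0 (by simp)
        simpa using this
      subst hb'
      rw [tdirs_cons_true, tdirs_cons_true]
      refine ⟨fun j => match j with | 0 => 0 | (k+1) => ψ₂ k + 1, rfl, ?_, ?_⟩
      · show ψ₂ (tdirs L₂).length + 1 = (tdirs L₂').length + 1
        rw [hψlen]
      · intro i
        match i with
        | 0 =>
          refine ⟨fun _ => Or.inl ⟨by simp, ?_⟩, fun hf => by simp at hf⟩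
          show ψ₂ 0 + 1 = 0 + 1
          rw [hψ0]
        | (k+1) =>
          simp only [List.getElem?_cons_succ]
          exact ⟨fun hf => nedge_cons_shift ((hψc k).1 hf),
                 fun hf => nedge_cons_shift ((hψc k).2 hf)⟩
    | false =>
      cases b' with
      | true =>
        rw [tdirs_cons_false, tdirs_cons_true]
        refine ⟨fun j => match j with | 0 => 0 | 1 => 1 | 2 => 0 | (k+3) => ψ₂ k + 1,
          rfl, ?_, ?_⟩
        · show ψ₂ (tdirs L₂).length + 1 = (tdirs L₂').length + 1
          rw [hψlen]
        · intro i
          match i with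
          | 0 => exact ⟨fun _ => Or.inl ⟨by simp, rfl⟩, fun hf => by simp at hf⟩
          | 1 => exact ⟨fun hf => by simp at hf, fun _ => Or.inl ⟨by simp, rfl⟩⟩
          | 2 =>
            refine ⟨fun _ => Or.inl ⟨by simp, ?_⟩, fun hf => by simp at hf⟩
            show ψ₂ 0 + 1 = 0 + 1
            rw [hψ0]
          | (k+3) =>
            simp only [List.getElem?_cons_succ]
            exact ⟨fun hf => nedge_cons_shift ((hψc k).1 hf),
                   fun hf => nedge_cons_shift ((hψc k).2 hf)⟩
      | false =>
        rw [tdirs_cons_false, tdirs_cons_false]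
        refine ⟨fun j => match j with | 0 => 0 | 1 => 1 | 2 => 2 | (k+3) => ψ₂ k + 3,
          rfl, ?_, ?_⟩
        · show ψ₂ (tdirs L₂).length + 3 = (tdirs L₂').length + 3
          rw [hψlen]
        · intro i
          match i with
          | 0 => exact ⟨fun _ => Or.inl ⟨by simp, rfl⟩, fun hf => by simp at hf⟩
          | 1 => exact ⟨fun hf => by simp at hf, fun _ => Or.inr ⟨by simp, rfl⟩⟩
          | 2 =>
            refine ⟨fun _ => Or.inl ⟨by simp, ?_⟩, fun hf => by simp at hf⟩
            show ψ₂ 0 + 3 = 2 + 1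
            rw [hψ0]
          | (k+3) =>
            simp only [List.getElem?_cons_succ]
            exact ⟨fun hf => nedge_cons_shift (nedge_cons_shift (nedge_cons_shift ((hψc k).1 hf))),
                   fun hf => nedge_cons_shift (nedge_cons_shift (nedge_cons_shift ((hψc k).2 hf)))⟩

lemma map_pointwise {α : Type*} (l : List α) (f f' : α → Bool)
    (h : ∀ x ∈ l, f x = true → f' x = true) :
    ∀ i : ℕ, (l.map f)[i]? = some true → (l.map f')[i]? = some true := by
  intro i hi
  obtain ⟨hl, hget⟩ := List.getElem?_eq_some_iff.mp hi
  simp only [List.length_map] at hl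
  rw [List.getElem_map] at hget
  rw [List.getElem?_eq_getElem (by simpa using hl), List.getElem_map]
  exact congrArg some (h l[i] (List.getElem_mem _) hget)

variable {D : Type} [DecidableEq D] {n : ℕ} {R : Set (Fin n → D)}

lemma LQ_get_fin {S : Finset (Fin n)} (x : Fin n) :
    (LQ n S)[x.1+1]? = some (decide (x ∈ S)) := by
  simp only [LQ, List.getElem?_cons_succ, List.getElem?_map]
  have : (List.finRange n)[x.1]? = some x := by
    rw [List.getElem?_eq_getElem (by simp [List.length_finRange])]
    simp [List.getElem_finRange]
  rw [this]
  rfl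

/-- subset on the Q-block lists -/
lemma LQ_sub {S S' : Finset (Fin n)} (h : S ⊆ S') :
    ∀ i : ℕ, (LQ n S)[i]? = some true → (LQ n S')[i]? = some true := by
  intro i
  match i with
  | 0 => intro _; simp [LQ]
  | (k+1) =>
    simp only [LQ, List.getElem?_cons_succ]
    refine map_pointwise _ _ _ ?_ k
    intro x _ hx
    simp only [decide_eq_true_eq] at hx ⊢
    exact h hx

lemma LQ_sub_inv {S S' : Finset (Fin n)}
    (hsub : ∀ i : ℕ, (LQ n S)[i]? = some true → (LQ n S')[i]? = some true) :
    S ⊆ S' := by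
  intro x hx
  have := hsub (x.1+1) (by rw [LQ_get_fin]; simp [hx])
  rw [LQ_get_fin] at this
  simpa using this

end Backward

section Conn

variable {D : Type} [DecidableEq D] {n : ℕ} {R : Set (Fin n → D)}

lemma weakReach_symm {V : Type*} {E : V → V → Prop} {a b : V}
    (h : WeakReach E a b) : WeakReach E b a :=
  by
    haveI : Std.Symm (fun a b => E a b ∨ E b a) := ⟨fun _ _ hxy => Or.symm hxy⟩
    exact Relation.ReflTransGen.stdSymm.symm _ _ h

lemma weakReach_pv (d : D) (t : Fin n → D) (ht : t ∈ R) :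
    ∀ j, j ≤ (pathDirs d t).length →
      WeakReach DEdge (pathVert d t ht j) (pathVert d t ht 0) := by
  intro j
  induction j with
  | zero => intro _; exact Relation.ReflTransGen.refl
  | succ j ih =>
    intro hj1
    have hj : j < (pathDirs d t).length := by omega
    have hsome : (pathDirs d t)[j]? = some ((pathDirs d t)[j]'hj) :=
      List.getElem?_eq_getElem hj
    cases hbv : (pathDirs d t)[j]'hj
    · rw [hbv] at hsome
      exact Relation.ReflTransGen.head
        (Or.inl (nedge_DEdge ht (Or.inr ⟨hsome, rfl⟩))) (ih (by omega))
    · rw [hbv] at hsome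
      exact Relation.ReflTransGen.head
        (Or.inr (nedge_DEdge ht (Or.inl ⟨hsome, rfl⟩))) (ih (by omega))

lemma weakReach_top_inl (d : D) (t : Fin n → D) (ht : t ∈ R) :
    WeakReach DEdge (Sum.inr (Sum.inl ⟨t, ht⟩) : DVert D n R) (Sum.inl d) := by
  have hlen := pathDirs_length_ge d t
  have := weakReach_pv d t ht (pathDirs d t).length (le_refl _)
  rwa [pathVert_top d t ht (by omega) (le_refl _), pathVert_zero] at this

lemma weakReach_all {t₀ : Fin n → D} (ht₀ : t₀ ∈ R) (d' : D) :
    ∀ v : DVert D n R, WeakReach DEdge v (Sum.inl d') := by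
  have hbase : ∀ d : D, WeakReach DEdge (Sum.inl d : DVert D n R) (Sum.inl d') :=
    fun d => Relation.ReflTransGen.trans
      (weakReach_symm (weakReach_top_inl d t₀ ht₀)) (weakReach_top_inl d' t₀ ht₀)
  intro v
  match v with
  | Sum.inl d => exact hbase d
  | Sum.inr (Sum.inl s) =>
    exact Relation.ReflTransGen.trans (weakReach_top_inl d' s.1 s.2)
      (hbase d')
  | Sum.inr (Sum.inr iv) =>
    have h0 : iv.j ≠ 0 := Nat.pos_iff_ne_zero.mp iv.hj0
    have hl : ¬ (pathDirs iv.d iv.r).length ≤ iv.j := not_le.mpr iv.hjlen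
    have := weakReach_pv iv.d iv.r iv.hr iv.j (le_of_lt iv.hjlen)
    rw [pathVert_inner iv.d iv.r iv.hr h0 hl, pathVert_zero] at this
    exact Relation.ReflTransGen.trans this (hbase iv.d)

end Conn
/-- `R` is a rigid core iff the digraph `𝒟(R)` is a rigid core. -/
theorem rigid_core_iff {D : Type} [Fintype D] [DecidableEq D] {n : ℕ} (hn : 1 ≤ n)
    (R : Set (Fin n → D)) (hR : R.Nonempty) :
    (∀ g : D → D, IsUnaryPolymorphism R g → g = id) ↔
      (∀ h : DVert D n R → DVert D n R, IsDigraphHom DEdge DEdge h → h = id) := by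
  obtain ⟨t₀, ht₀⟩ := hR
  set d₀ : D := t₀ ⟨0, hn⟩ with hd₀
  constructor
  · -- R rigid → 𝒟(R) rigid
    intro hRrigid h hhom
    -- level preservation
    have hstep : ∀ a b : DVert D n R, (DEdge a b ∨ DEdge b a) →
        levelV (h a) - levelV a = levelV (h b) - levelV b := by
      intro a b hab
      rcases hab with hab | hab
      · have h1 := DEdge_level hab
        have h2 := DEdge_level (hhom _ _ hab)
        omega
      · have h1 := DEdge_level hab
        have h2 := DEdge_level (hhom _ _ hab)
        omega
    have hconst : ∀ v : DVert D n R, levelV (h v) - levelV v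
        = levelV (h (Sum.inl d₀ : DVert D n R)) - levelV (Sum.inl d₀ : DVert D n R) := by
      have hgen : ∀ a b : DVert D n R, WeakReach DEdge a b →
          levelV (h a) - levelV a = levelV (h b) - levelV b := by
        intro a b hr
        induction hr with
        | refl => rfl
        | tail _ hbc ih => exact ih.trans (hstep _ _ hbc)
      intro v
      exact hgen v _ (weakReach_all ht₀ d₀ v)
    have hlevz : levelV (h (Sum.inl d₀ : DVert D n R)) - levelV (Sum.inl d₀ : DVert D n R) = 0 := by
      have c₀ := hconst (Sum.inr (Sum.inl ⟨t₀, ht₀⟩))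
      have e1 : levelV (Sum.inl d₀ : DVert D n R) = 0 := rfl
      have e2 : levelV (Sum.inr (Sum.inl ⟨t₀, ht₀⟩) : DVert D n R) = (n:ℤ)+2 := rfl
      have b1 := levelV_nonneg (h (Sum.inl d₀))
      have b2 := levelV_le (h (Sum.inr (Sum.inl ⟨t₀, ht₀⟩)))
      omega
    have hlev : ∀ v, levelV (h v) = levelV v := by
      intro v
      have := hconst v
      omega
    -- the induced map on D
    have hex : ∀ d : D, ∃ d', h (Sum.inl d) = Sum.inl d' := by
      intro d
      exact eq_inl_of_level (v := h (Sum.inl d)) (by exact (hlev _).trans rfl)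
    choose g hgd using hex
    -- image of top vertices
    have himage : ∀ (t : Fin n → D) (ht : t ∈ R), ∃ (t' : Fin n → D) (ht' : t' ∈ R),
        h (Sum.inr (Sum.inl ⟨t, ht⟩)) = Sum.inr (Sum.inl ⟨t', ht'⟩) ∧
        ∀ i : Fin n, g (t i) = t' i := by
      intro t ht
      obtain ⟨t₁', ht₁', p₁, htop₁, _, _, _, _⟩ :=
        copy_walk hhom hlev hgd (t ⟨0, hn⟩) t ht
      refine ⟨t₁', ht₁', htop₁, fun i => ?_⟩
      obtain ⟨ti', hti', pi, htopi, hcompati, hp0i, _, _⟩ :=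
        copy_walk hhom hlev hgd (t i) t ht
      have hteq : ti' = t₁' :=
        congrArg Subtype.val (Sum.inl.inj (Sum.inr.inj (htopi.symm.trans htop₁)))
      have hmw := main_walk (LQ n (Finset.univ.filter fun i' => (t i) = t i'))
          (LQ n (Finset.univ.filter fun i' => g (t i) = ti' i'))
          (by rw [LQ_length, LQ_length])
          (pathDirs (t i) t) (pathDirs (g (t i)) ti') pi 0 0
          (by rw [List.drop_zero, pathDirs_def])
          (by rw [List.drop_zero, pathDirs_def])
          hcompati (noDown_intro fun m hm => absurd hm (by omega)) hp0i
      have hsub := LQ_sub_inv hmw.1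
      have hiS : i ∈ Finset.univ.filter (fun i' => t i = t i') :=
        Finset.mem_filter.mpr ⟨Finset.mem_univ i, rfl⟩
      have := Finset.mem_filter.mp (hsub hiS)
      rw [← hteq]
      exact this.2
    -- g is a unary polymorphism
    have hpoly : IsUnaryPolymorphism R g := by
      intro t ht
      obtain ⟨t', ht', _, hall⟩ := himage t ht
      have : (fun i => g (t i)) = t' := funext hall
      rw [this]
      exact ht'
    have hgid : g = id := hRrigid g hpoly
    -- conclude h = id
    have hfix_inl : ∀ d : D, h (Sum.inl d) = Sum.inl d := by
      intro d
      rw [hgd d, hgid]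
      rfl
    have hfix_top : ∀ s : {t : Fin n → D // t ∈ R},
        h (Sum.inr (Sum.inl s)) = Sum.inr (Sum.inl s) := by
      intro ⟨t, ht⟩
      obtain ⟨t', ht', htop, hall⟩ := himage t ht
      have : t' = t := by
        funext i
        rw [← hall i, hgid]
        rfl
      subst this
      exact htop
    funext v
    match v with
    | Sum.inl d => exact hfix_inl d
    | Sum.inr (Sum.inl s) => exact hfix_top s
    | Sum.inr (Sum.inr iv) =>
      have hjlen := iv.hjlen
      have hj0 := iv.hj0
      obtain ⟨t', ht', p, htop, hcompat, hp0, hplen, hmaster⟩ :=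
        copy_walk hhom hlev hgd iv.d iv.r iv.hr
      have ht'eq : t' = iv.r := by
        have := htop.symm.trans (hfix_top ⟨iv.r, iv.hr⟩)
        exact congrArg Subtype.val (Sum.inl.inj (Sum.inr.inj this))
      subst ht'eq
      rw [hgid] at hcompat hmaster
      simp only [id_eq] at hcompat hmaster
      have hmw := main_walk (LQ n (Finset.univ.filter fun i' => iv.d = iv.r i'))
          (LQ n (Finset.univ.filter fun i' => iv.d = iv.r i'))
          rfl
          (pathDirs iv.d iv.r) (pathDirs iv.d iv.r) p 0 0
          (by rw [List.drop_zero, pathDirs_def])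
          (by rw [List.drop_zero, pathDirs_def])
          hcompat (noDown_intro fun m hm => absurd hm (by omega)) hp0
      have hid := hmw.2 rfl iv.j (by omega)
        (by rw [← pathDirs_def]; omega)
      have hpj : p iv.j = iv.j := by omega
      have hv : pathVert iv.d iv.r iv.hr iv.j = Sum.inr (Sum.inr iv) := by
        rw [pathVert_inner iv.d iv.r iv.hr (by omega) (not_le.mpr iv.hjlen)]
      calc h (Sum.inr (Sum.inr iv)) = h (pathVert iv.d iv.r iv.hr iv.j) := by rw [hv]
        _ = pathVert iv.d iv.r iv.hr (p iv.j) := hmaster iv.j (le_of_lt iv.hjlen)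
        _ = (show DVert D n R from Sum.inr (Sum.inr iv)) := by rw [hpj, hv]
  · -- 𝒟(R) rigid → R rigid
    intro hDrigid g hgpoly
    have hψ : ∀ (d : D) (t : Fin n → D), ∃ ψ : ℕ → ℕ, ψ 0 = 0 ∧
        ψ (pathDirs d t).length = (pathDirs (g d) fun i => g (t i)).length ∧
        compat (pathDirs d t) (pathDirs (g d) fun i => g (t i)) ψ := by
      intro d t
      rw [pathDirs_def d t, pathDirs_def (g d) (fun i => g (t i))]
      apply exists_walkmap
      · rw [LQ_length, LQ_length]
      · apply LQ_sub
        intro i hi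
        rw [Finset.mem_filter] at hi ⊢
        exact ⟨Finset.mem_univ i, congrArg g hi.2⟩
    choose ψ hψ0 hψlen hψc using hψ
    set h : DVert D n R → DVert D n R := fun v =>
      match v with
      | Sum.inl d => Sum.inl (g d)
      | Sum.inr (Sum.inl s) => Sum.inr (Sum.inl ⟨fun i => g (s.1 i), hgpoly s.1 s.2⟩)
      | Sum.inr (Sum.inr iv) =>
          pathVert (g iv.d) (fun i => g (iv.r i)) (hgpoly iv.r iv.hr) (ψ iv.d iv.r iv.j)
      with hhdef
    have hkey : ∀ (d : D) (t : Fin n → D) (ht : t ∈ R) (j : ℕ),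
        j ≤ (pathDirs d t).length →
        h (pathVert d t ht j)
          = pathVert (g d) (fun i => g (t i)) (hgpoly t ht) (ψ d t j) := by
      intro d t ht j hj
      by_cases h0 : j = 0
      · subst h0
        rw [pathVert_zero, hψ0 d t, pathVert_zero]
      by_cases hl : (pathDirs d t).length ≤ j
      · have hjl : j = (pathDirs d t).length := by omega
        subst hjl
        rw [pathVert_top d t ht h0 hl, hψlen d t]
        have hlge := pathDirs_length_ge (g d) (fun i => g (t i))
        rw [pathVert_top (g d) _ (hgpoly t ht) (by omega) (le_refl _)]
      · rw [pathVert_inner d t ht h0 hl]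
    have hhom : IsDigraphHom DEdge DEdge h := by
      intro a b hab
      obtain ⟨d, t, ht, x, y, hne, rfl, rfl⟩ := DEdge_elim hab
      rw [hkey d t ht x (nedge_le hne).1, hkey d t ht y (nedge_le hne).2]
      apply nedge_DEdge
      rcases hne with ⟨hg, rfl⟩ | ⟨hg, rfl⟩
      · exact (hψc d t x).1 hg
      · exact (hψc d t y).2 hg
    have hid := hDrigid h hhom
    funext d
    have : h (Sum.inl d) = Sum.inl d := by rw [hid]; rfl
    exact Sum.inl.inj this
end Walk
end

section
/- Let D be a finite set, R ⊆ D^n a nonempty n-ary relation, and 𝒟 = 𝒟(R) the digraph constructed from R. Every endomorphism of 𝒟 maps D into D and R into R, its restriction to D is a unary polymorphism of R, and the restriction map from the set of endomorphisms of 𝒟 to the set of unary polymorphisms of R is a bijection; moreover the action of an endomorphism of 𝒟 on R is the componentwise action of its restriction to D. -/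
open scoped NNRat

namespace DRel

variable {n : ℕ}

/-- The block of directions for coordinate `l`. -/
def blkL (S : Finset (Fin n)) (l : ℕ) : List Bool :=
  if h : l < n then (if ⟨l, h⟩ ∈ S then [true] else [true, false, true]) else [true]

/-- Offset (vertex position) of the start of block `l`. -/
def off (S : Finset (Fin n)) : ℕ → ℕ
  | 0 => 1
  | l + 1 => off S l + (blkL S l).length

def body (S : Finset (Fin n)) (k : ℕ) : List Bool := (List.range k).flatMap (blkL S)

lemma body_succ (S : Finset (Fin n)) (k : ℕ) :
    body S (k+1) = body S k ++ blkL S k := by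
  simp [body, List.range_succ]

lemma length_body (S : Finset (Fin n)) (k : ℕ) : (body S k).length + 1 = off S k := by
  induction k with
  | zero => simp [body, off]
  | succ k ih => rw [body_succ, off, ← ih, List.length_append]; ring

lemma QDirs_eq (S : Finset (Fin n)) : QDirs n S = true :: (body S n ++ [true]) := by
  unfold QDirs body
  rw [← (show (List.finRange n).map (fun i : Fin n => (i : ℕ)) = List.range n from
    List.ext_getElem (by simp) (by simp)), List.flatMap_map]
  congr 2
  apply List.flatMap_congr
  intro l _
  simp only [blkL, l.isLt, dif_pos, Fin.eta]

lemma blkL_length_pos (S : Finset (Fin n)) (l : ℕ) : 0 < (blkL S l).length := by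
  unfold blkL; split <;> [skip; simp] ; split <;> simp

lemma blkL_length_le (S : Finset (Fin n)) (l : ℕ) : (blkL S l).length ≤ 3 := by
  unfold blkL; split <;> [skip; simp] ; split <;> simp

lemma blkL_of_mem {S : Finset (Fin n)} {l : ℕ} (hl : l < n) (h : ⟨l, hl⟩ ∈ S) :
    blkL S l = [true] := by simp [blkL, hl, h]

lemma blkL_of_not_mem {S : Finset (Fin n)} {l : ℕ} (hl : l < n) (h : ⟨l, hl⟩ ∉ S) :
    blkL S l = [true, false, true] := by simp [blkL, hl, h]

lemma off_pos (S : Finset (Fin n)) (l : ℕ) : 0 < off S l := by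
  induction l with
  | zero => simp [off]
  | succ l ih => rw [off]; omega

lemma off_lt_succ (S : Finset (Fin n)) (l : ℕ) : off S l < off S (l+1) := by
  have := blkL_length_pos S l; rw [off]; omega

lemma off_strictMono (S : Finset (Fin n)) : StrictMono (off S) :=
  strictMono_nat_of_lt_succ (off_lt_succ S)

lemma off_mono (S : Finset (Fin n)) : Monotone (off S) := (off_strictMono S).monotone

lemma off_succ_of_not_mem {S : Finset (Fin n)} {l : ℕ} (hl : l < n) (h : ⟨l, hl⟩ ∉ S) :
    off S (l+1) = off S l + 3 := by rw [off, blkL_of_not_mem hl h]; rfl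

lemma off_succ_of_mem {S : Finset (Fin n)} {l : ℕ} (hl : l < n) (h : ⟨l, hl⟩ ∈ S) :
    off S (l+1) = off S l + 1 := by rw [off, blkL_of_mem hl h]; rfl

/-- An offset is never two more than the start of a zigzag block. -/
lemma off_ne_peak_succ {S : Finset (Fin n)} {l' : ℕ} (hl' : l' < n) (h : ⟨l', hl'⟩ ∉ S)
    (l : ℕ) : off S l ≠ off S l' + 2 := by
  intro hEq
  rcases le_or_gt l l' with hle | hlt
  · have := off_mono S hle; omega
  · have h1 := off_mono S hlt
    rw [off_succ_of_not_mem hl' h] at h1; omega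


/-- Direction at edge-index `q`, with default `true` out of range. -/
def dAt (ds : List Bool) (q : ℕ) : Bool := ds.getD q true

lemma dAt_of_le {ds : List Bool} {q : ℕ} (h : ds.length ≤ q) : dAt ds q = true :=
  List.getD_eq_default ds true h

lemma length_QDirs (S : Finset (Fin n)) : (QDirs n S).length = off S n + 1 := by
  have := length_body S n
  rw [QDirs_eq]
  simp only [List.length_cons, List.length_append, List.length_nil]
  omega

lemma body_prefix (S : Finset (Fin n)) {l k : ℕ} (h : l < k) :
    ∃ rest, body S k = (body S l ++ blkL S l) ++ rest := by
  induction k with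
  | zero => omega
  | succ k ih =>
    rcases Nat.lt_succ_iff_lt_or_eq.mp h with h' | h'
    · obtain ⟨rest, hr⟩ := ih h'
      exact ⟨rest ++ blkL S k, by rw [body_succ, hr, List.append_assoc]⟩
    · subst h'; exact ⟨[], by rw [body_succ, List.append_nil]⟩

lemma dAt_QDirs_block (S : Finset (Fin n)) {l : ℕ} (hl : l < n) {δ : ℕ}
    (hδ : δ < (blkL S l).length) :
    dAt (QDirs n S) (off S l + δ) = (blkL S l).getD δ true := by
  obtain ⟨rest, hr⟩ := body_prefix S hl
  have hlen : (body S l).length + 1 = off S l := length_body S l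
  have hpos : off S l + δ = ((body S l).length + δ) + 1 := by omega
  rw [QDirs_eq, dAt, hpos, List.getD_cons_succ, hr, List.append_assoc, List.append_assoc,
    List.getD_append_right _ _ _ _ (by omega), Nat.add_sub_cancel_left,
    List.getD_append _ _ _ _ hδ]

lemma dAt_QDirs_zero (S : Finset (Fin n)) : dAt (QDirs n S) 0 = true := by
  rw [QDirs_eq]; rfl

lemma dAt_QDirs_last (S : Finset (Fin n)) : dAt (QDirs n S) (off S n) = true := by
  have hlen : (body S n).length + 1 = off S n := length_body S n
  rw [QDirs_eq, dAt]
  have h : off S n = (body S n).length + 1 := hlen.symm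
  rw [h, List.getD_cons_succ, List.getD_append_right _ _ _ _ (le_refl _), Nat.sub_self]
  rfl

lemma dAt_QDirs_off {S : Finset (Fin n)} {l : ℕ} (hl : l ≤ n) :
    dAt (QDirs n S) (off S l) = true := by
  rcases eq_or_lt_of_le hl with h | h
  · subst h; exact dAt_QDirs_last S
  · have h0 := blkL_length_pos S l
    have hb := dAt_QDirs_block S h (δ := 0) h0
    rw [Nat.add_zero] at hb
    rw [hb]
    by_cases hm : ⟨l, h⟩ ∈ S
    · rw [blkL_of_mem h hm]; rfl
    · rw [blkL_of_not_mem h hm]; rfl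

lemma dAt_QDirs_peak {S : Finset (Fin n)} {l : ℕ} (hl : l < n) (h : ⟨l, hl⟩ ∉ S) :
    dAt (QDirs n S) (off S l + 1) = false := by
  rw [dAt_QDirs_block S hl (δ := 1) (by rw [blkL_of_not_mem hl h]; simp),
    blkL_of_not_mem hl h]; rfl

lemma dAt_QDirs_valley {S : Finset (Fin n)} {l : ℕ} (hl : l < n) (h : ⟨l, hl⟩ ∉ S) :
    dAt (QDirs n S) (off S l + 2) = true := by
  rw [dAt_QDirs_block S hl (δ := 2) (by rw [blkL_of_not_mem hl h]; simp),
    blkL_of_not_mem hl h]; rfl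

lemma decomp_aux (S : Finset (Fin n)) {q : ℕ} (h0 : 0 < q) :
    ∀ k, q < off S k → ∃ l, l < k ∧ ∃ δ, δ < (blkL S l).length ∧ q = off S l + δ := by
  intro k
  induction k with
  | zero => intro h; rw [off] at h; omega
  | succ k ih =>
    intro h
    rcases lt_or_ge q (off S k) with h' | h'
    · obtain ⟨l, hl, δ, hδ, hq⟩ := ih h'
      exact ⟨l, by omega, δ, hδ, hq⟩
    · exact ⟨k, by omega, q - off S k, by rw [off] at h; omega, by omega⟩

/-- Decomposition of positions of `QDirs`. -/
lemma decomp (S : Finset (Fin n)) {q : ℕ} (h0 : 0 < q) (hq : q < off S n + 1) :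
    q = off S n ∨ ∃ l, ∃ hl : l < n,
      (q = off S l) ∨ (⟨l, hl⟩ ∉ S ∧ (q = off S l + 1 ∨ q = off S l + 2)) := by
  rcases eq_or_lt_of_le (Nat.lt_succ_iff.mp hq) with h | h
  · exact Or.inl h
  · right
    obtain ⟨l, hl, δ, hδ, hq'⟩ := decomp_aux S h0 n h
    refine ⟨l, hl, ?_⟩
    by_cases hm : ⟨l, hl⟩ ∈ S
    · rw [blkL_of_mem hl hm] at hδ
      simp only [List.length_singleton] at hδ
      left; omega
    · have hδ3 : δ < 3 := by rw [blkL_of_not_mem hl hm] at hδ; simpa using hδ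
      clear hδ
      interval_cases δ
      · left; omega
      · exact Or.inr ⟨hm, Or.inl (by omega)⟩
      · exact Or.inr ⟨hm, Or.inr (by omega)⟩

lemma dAt_QDirs_false_iff (S : Finset (Fin n)) (q : ℕ) :
    dAt (QDirs n S) q = false ↔ ∃ l, ∃ hl : l < n, ⟨l, hl⟩ ∉ S ∧ q = off S l + 1 := by
  constructor
  · intro hf
    have hlen : q < off S n + 1 := by
      by_contra hge
      rw [dAt_of_le (by rw [length_QDirs]; omega)] at hf; simp at hf
    have h0 : 0 < q := by
      rcases Nat.eq_zero_or_pos q with rfl | h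
      · rw [dAt_QDirs_zero] at hf; simp at hf
      · exact h
    rcases decomp S h0 hlen with h | ⟨l, hl, h | ⟨hm, h | h⟩⟩
    · rw [h, dAt_QDirs_last] at hf; simp at hf
    · rw [h, dAt_QDirs_off (le_of_lt hl)] at hf; simp at hf
    · exact ⟨l, hl, hm, h⟩
    · rw [h, dAt_QDirs_valley hl hm] at hf; simp at hf
  · rintro ⟨l, hl, hm, rfl⟩
    exact dAt_QDirs_peak hl hm

/-! ### Levels along an oriented path -/

def lvl (ds : List Bool) (q : ℕ) : ℤ :=
  ((ds.take q).count true : ℤ) - ((ds.take q).count false : ℤ)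

lemma lvl_zero (ds : List Bool) : lvl ds 0 = 0 := by simp [lvl]

lemma lvl_succ {ds : List Bool} {q : ℕ} (h : q < ds.length) :
    lvl ds (q+1) = lvl ds q + (if dAt ds q = true then 1 else -1) := by
  unfold lvl
  have ht : ds[q]?.toList = [ds[q]] := by rw [List.getElem?_eq_getElem h]; rfl
  rw [List.take_succ, ht, List.count_append, List.count_append, dAt,
    List.getD_eq_getElem _ _ h]
  cases hb : ds[q] <;> simp [hb] <;> push_cast <;> ring

lemma off_lt_length {S : Finset (Fin n)} {l : ℕ} (hl : l ≤ n) :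
    off S l < (QDirs n S).length := by
  rw [length_QDirs]; have := off_mono S hl; omega

lemma lvl_QDirs_off (S : Finset (Fin n)) : ∀ {l : ℕ}, l ≤ n →
    lvl (QDirs n S) (off S l) = l + 1 := by
  intro l
  induction l with
  | zero =>
    intro _
    have h0 : (0:ℕ) < (QDirs n S).length := by rw [length_QDirs]; omega
    have : off S 0 = 0 + 1 := rfl
    rw [this, lvl_succ h0, lvl_zero, dAt_QDirs_zero]
    simp
  | succ l ih =>
    intro hl1
    have hl : l < n := hl1
    have hIH := ih (le_of_lt hl)
    by_cases hm : ⟨l, hl⟩ ∈ S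
    · rw [off_succ_of_mem hl hm, lvl_succ (off_lt_length (le_of_lt hl)),
        dAt_QDirs_off (le_of_lt hl), hIH]
      simp
    · have h3 : off S l + 3 ≤ off S n := by
        rw [← off_succ_of_not_mem hl hm]; exact off_mono S hl1
      have hq1 : off S l + 1 < (QDirs n S).length := by rw [length_QDirs]; omega
      have hq2 : off S l + 2 < (QDirs n S).length := by rw [length_QDirs]; omega
      rw [off_succ_of_not_mem hl hm]
      have e1 : off S l + 3 = (off S l + 2) + 1 := by ring
      rw [e1, lvl_succ hq2, dAt_QDirs_valley hl hm]
      have e2 : off S l + 2 = (off S l + 1) + 1 := by ring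
      rw [e2, lvl_succ hq1, dAt_QDirs_peak hl hm,
        lvl_succ (off_lt_length (le_of_lt hl)), dAt_QDirs_off (le_of_lt hl), hIH]
      simp

lemma lvl_QDirs_peak {S : Finset (Fin n)} {l : ℕ} (hl : l < n) (hm : ⟨l, hl⟩ ∉ S) :
    lvl (QDirs n S) (off S l + 1) = l + 2 := by
  rw [lvl_succ (off_lt_length (le_of_lt hl)), dAt_QDirs_off (le_of_lt hl),
    lvl_QDirs_off S (le_of_lt hl)]
  simp
  ring

lemma lvl_QDirs_valley {S : Finset (Fin n)} {l : ℕ} (hl : l < n) (hm : ⟨l, hl⟩ ∉ S) :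
    lvl (QDirs n S) (off S l + 2) = l + 1 := by
  have h3 : off S l + 3 ≤ off S n := by
    rw [← off_succ_of_not_mem hl hm]; exact off_mono S hl
  have hq1 : off S l + 1 < (QDirs n S).length := by rw [length_QDirs]; omega
  have e2 : off S l + 2 = (off S l + 1) + 1 := by ring
  rw [e2, lvl_succ hq1, dAt_QDirs_peak hl hm, lvl_QDirs_peak hl hm]
  simp only [Bool.false_eq_true, if_false]
  omega

lemma lvl_QDirs_top (S : Finset (Fin n)) :
    lvl (QDirs n S) (off S n + 1) = n + 2 := by
  rw [lvl_succ (off_lt_length (le_refl n)), dAt_QDirs_last, lvl_QDirs_off S (le_refl n)]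
  simp
  ring

lemma lvl_QDirs_bounds (S : Finset (Fin n)) {q : ℕ} (h0 : 0 < q) (hq : q < off S n + 1) :
    1 ≤ lvl (QDirs n S) q ∧ lvl (QDirs n S) q ≤ n + 1 := by
  rcases decomp S h0 hq with h | ⟨l, hl, h | ⟨hm, h | h⟩⟩
  · rw [h, lvl_QDirs_off S (le_refl n)]; omega
  · rw [h, lvl_QDirs_off S (le_of_lt hl)]
    constructor <;> [omega; (push_cast; omega)]
  · rw [h, lvl_QDirs_peak hl hm]
    constructor <;> [omega; (push_cast; omega)]
  · rw [h, lvl_QDirs_valley hl hm]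
    constructor <;> [omega; (push_cast; omega)]

/-! ### Walks between two `QDirs` paths -/

lemma dAt_QDirs_off_pred (S : Finset (Fin n)) (l : ℕ) :
    dAt (QDirs n S) (off S l - 1) = true := by
  cases hb : dAt (QDirs n S) (off S l - 1) with
  | true => rfl
  | false =>
    exfalso
    rw [dAt_QDirs_false_iff] at hb
    obtain ⟨l₂, hl₂, hm₂, heq⟩ := hb
    have h1 := off_pos S l
    have h2 := off_pos S l₂
    exact off_ne_peak_succ hl₂ hm₂ l (by omega)

section Walk

variable (S S' : Finset (Fin n))

/-- One admissible step of a position-map between the two paths. -/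
def StepAt (ψ : ℕ → ℕ) (j : ℕ) : Prop :=
  (ψ (j+1) = ψ j + 1 ∧ dAt (QDirs n S') (ψ j) = dAt (QDirs n S) j) ∨
  (0 < ψ j ∧ ψ (j+1) = ψ j - 1 ∧ dAt (QDirs n S') (ψ j - 1) = !(dAt (QDirs n S) j))

def StepRel (ψ : ℕ → ℕ) : Prop := ∀ j, j < off S n + 1 → StepAt S S' ψ j

def Incl (k : ℕ) : Prop := ∀ l, ∀ hl : l < n, l < k → ⟨l, hl⟩ ∈ S → ⟨l, hl⟩ ∈ S'

/-- Invariant describing the position `p` of the image of position `q`. -/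
def Good (q p : ℕ) : Prop :=
  (q = 0 ∧ p = 0) ∨
  (∃ l, l ≤ n ∧ q = off S l ∧ p = off S' l ∧ Incl S S' l) ∨
  (∃ l, ∃ hl : l < n, ⟨l, hl⟩ ∉ S ∧ q = off S l + 1 ∧ p = off S' l + 1 ∧ Incl S S' l) ∨
  (∃ l, ∃ hl : l < n, ⟨l, hl⟩ ∉ S ∧ ⟨l, hl⟩ ∈ S' ∧ q = off S l + 2 ∧ p = off S' l ∧
    Incl S S' l) ∨
  (∃ l, ∃ hl : l < n, ⟨l, hl⟩ ∉ S ∧ ⟨l, hl⟩ ∉ S' ∧ q = off S l + 2 ∧ p = off S' l + 2 ∧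
    Incl S S' l) ∨
  (q = off S n + 1 ∧ p = off S' n + 1 ∧ Incl S S' n)

variable {S S'}

/-- The main forcing induction: any admissible position map starting at `0`
satisfies the invariant. -/
theorem main2 {ψ : ℕ → ℕ} (h0 : ψ 0 = 0) (hs : StepRel S S' ψ) :
    ∀ q, q ≤ off S n + 1 → Good S S' q (ψ q) := by
  intro q
  induction q with
  | zero => intro _; exact Or.inl ⟨rfl, h0⟩
  | succ q ih =>
    intro hq1
    have hqL : q < off S n + 1 := by omega
    have hg := ih (by omega)
    have hstep := hs q hqL
    unfold StepAt at hstep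
    rcases hg with ⟨hq, hp⟩ | ⟨l, hl, hq, hp, hInc⟩ | ⟨l, hl, hmem, hq, hp, hInc⟩ |
      ⟨l, hl, hm1, hm2, hq, hp, hInc⟩ | ⟨l, hl, hm1, hm2, hq, hp, hInc⟩ | ⟨hq, hp, hInc⟩
    -- Case G0 : q = 0
    · subst hq
      rw [h0] at hstep
      rcases hstep with ⟨h1, _⟩ | ⟨h1, _⟩
      · refine Or.inr (Or.inl ⟨0, by omega, rfl, ?_, ?_⟩)
        · rw [h1]; rfl
        · intro l hl hl0; omega
      · omega
    -- Case GB : q = off S l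
    · subst hq
      rw [hp] at hstep
      have hdq : dAt (QDirs n S) (off S l) = true := dAt_QDirs_off hl
      rcases hstep with ⟨h1, _⟩ | ⟨hb0, hb1, hb2⟩
      swap
      · rw [hdq] at hb2
        exfalso
        have := dAt_QDirs_off_pred S' l
        rw [this] at hb2; exact Bool.noConfusion hb2
      · rcases eq_or_lt_of_le hl with hln | hln
        · -- l = n : we reach the top
          subst hln
          exact Or.inr (Or.inr (Or.inr (Or.inr (Or.inr ⟨rfl, by rw [h1], hInc⟩))))
        · by_cases hmem : ⟨l, hln⟩ ∈ S
          · -- single edge block: derive l ∈ S'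
            have hq1L : off S l + 1 < off S n + 1 := by
              have := off_mono S hln
              rw [off_succ_of_mem hln hmem] at this; omega
            have hq1eq : off S l + 1 = off S (l+1) := (off_succ_of_mem hln hmem).symm
            have hmem' : ⟨l, hln⟩ ∈ S' := by
              by_contra hm'
              have hstep1 := hs (off S l + 1) hq1L
              unfold StepAt at hstep1
              rw [h1] at hstep1
              have hd1 : dAt (QDirs n S) (off S l + 1) = true := by
                rw [hq1eq]; exact dAt_QDirs_off hln
              rcases hstep1 with ⟨_, h2⟩ | ⟨_, _, h2⟩ <;> rw [hd1] at h2
              · rw [dAt_QDirs_peak hln hm'] at h2; exact Bool.noConfusion h2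
              · have : off S' l + 1 - 1 = off S' l := by omega
                rw [this, dAt_QDirs_off (le_of_lt hln)] at h2
                exact Bool.noConfusion h2
            refine Or.inr (Or.inl ⟨l+1, hln, hq1eq, ?_, ?_⟩)
            · rw [h1, off_succ_of_mem hln hmem']
            · intro l' hl' hlt hmS
              rcases Nat.lt_succ_iff_lt_or_eq.mp hlt with h | h
              · exact hInc l' hl' h hmS
              · subst h; exact hmem'
          · -- zigzag block begins
            refine Or.inr (Or.inr (Or.inl ⟨l, hln, hmem, rfl, by rw [h1], hInc⟩))
    -- Case GP : q = off S l + 1  (peak of a domain zigzag)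
    · subst hq
      rw [hp] at hstep
      have hdq : dAt (QDirs n S) (off S l + 1) = false := dAt_QDirs_peak hl hmem
      have hoff3 : off S (l+1) = off S l + 3 := off_succ_of_not_mem hl hmem
      have hfit : off S (l+1) ≤ off S n := off_mono S hl
      by_cases hm' : ⟨l, hl⟩ ∈ S'
      · -- image block is a single edge: fold back
        rcases hstep with ⟨h1, h2⟩ | ⟨hb0, hb1, hb2⟩
        · exfalso
          rw [hdq] at h2
          have heq : off S' l + 1 = off S' (l+1) := (off_succ_of_mem hl hm').symm
          rw [heq, dAt_QDirs_off hl] at h2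
          exact Bool.noConfusion h2
        · refine Or.inr (Or.inr (Or.inr (Or.inl ⟨l, hl, hmem, hm', by omega, ?_, hInc⟩)))
          rw [hb1]; omega
      · -- image block is a zigzag: must go to the valley
        rcases hstep with ⟨h1, h2⟩ | ⟨hb0, hb1, hb2⟩
        · refine Or.inr (Or.inr (Or.inr (Or.inr (Or.inl
            ⟨l, hl, hmem, hm', by omega, by rw [h1], hInc⟩))))
        · -- going back to off S' l leads to a dead end two steps later
          exfalso
          have hb1' : ψ (off S l + 2) = off S' l := by
            have e2 : off S l + 2 = off S l + 1 + 1 := by omega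
            rw [e2, hb1]; omega
          have hq2L : off S l + 2 < off S n + 1 := by omega
          have hstep2 := hs (off S l + 2) hq2L
          unfold StepAt at hstep2
          have hd2 : dAt (QDirs n S) (off S l + 2) = true := dAt_QDirs_valley hl hmem
          rw [hb1', hd2] at hstep2
          rcases hstep2 with ⟨h1, h2⟩ | ⟨hb0', hb1x, hb2'⟩
          · -- forced up to the image peak
            have h1' : ψ (off S l + 3) = off S' l + 1 := by
              have e3 : off S l + 3 = off S l + 2 + 1 := by omega
              rw [e3, h1]
            have hq3L : off S l + 3 < off S n + 1 := by omega
            have hstep3 := hs (off S l + 3) hq3L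
            unfold StepAt at hstep3
            have hd3 : dAt (QDirs n S) (off S l + 3) = true := by
              rw [← hoff3]; exact dAt_QDirs_off (by omega)
            rw [h1', hd3] at hstep3
            rcases hstep3 with ⟨_, h2'⟩ | ⟨_, _, h2'⟩
            · rw [dAt_QDirs_peak hl hm'] at h2'; exact Bool.noConfusion h2'
            · have e : off S' l + 1 - 1 = off S' l := by omega
              rw [e, dAt_QDirs_off (le_of_lt hl)] at h2'
              exact absurd h2' (by decide)
          · rw [dAt_QDirs_off_pred S' l] at hb2'
            exact absurd hb2' (by decide)
    -- Case GV1 : q = off S l + 2, image folded back to off S' l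
    · subst hq
      rw [hp] at hstep
      have hdq : dAt (QDirs n S) (off S l + 2) = true := dAt_QDirs_valley hl hm1
      have hoff3 : off S (l+1) = off S l + 3 := off_succ_of_not_mem hl hm1
      rcases hstep with ⟨h1, h2⟩ | ⟨hb0, hb1, hb2⟩
      · refine Or.inr (Or.inl ⟨l+1, by omega, by omega, ?_, ?_⟩)
        · rw [h1, off_succ_of_mem hl hm2]
        · intro l' hl' hlt hmS
          rcases Nat.lt_succ_iff_lt_or_eq.mp hlt with h | h
          · exact hInc l' hl' h hmS
          · exfalso; subst h; exact hm1 hmS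
      · exfalso
        rw [hdq, dAt_QDirs_off_pred S' l] at hb2
        exact absurd hb2 (by decide)
    -- Case GV2 : q = off S l + 2, image at its own valley
    · subst hq
      rw [hp] at hstep
      have hdq : dAt (QDirs n S) (off S l + 2) = true := dAt_QDirs_valley hl hm1
      have hoff3 : off S (l+1) = off S l + 3 := off_succ_of_not_mem hl hm1
      have hoff3' : off S' (l+1) = off S' l + 3 := off_succ_of_not_mem hl hm2
      have hfit : off S (l+1) ≤ off S n := off_mono S hl
      rcases hstep with ⟨h1, h2⟩ | ⟨hb0, hb1, hb2⟩
      · refine Or.inr (Or.inl ⟨l+1, by omega, by omega, by rw [h1]; omega, ?_⟩)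
        intro l' hl' hlt hmS
        rcases Nat.lt_succ_iff_lt_or_eq.mp hlt with h | h
        · exact hInc l' hl' h hmS
        · exfalso; subst h; exact hm1 hmS
      · -- stepping back to the image peak leads to a dead end
        exfalso
        have hb1' : ψ (off S l + 3) = off S' l + 1 := by
          have e3 : off S l + 3 = off S l + 2 + 1 := by omega
          rw [e3, hb1]; omega
        have hq3L : off S l + 3 < off S n + 1 := by omega
        have hstep3 := hs (off S l + 3) hq3L
        unfold StepAt at hstep3
        have hd3 : dAt (QDirs n S) (off S l + 3) = true := by
          rw [← hoff3]; exact dAt_QDirs_off (by omega)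
        rw [hb1', hd3] at hstep3
        rcases hstep3 with ⟨_, h2'⟩ | ⟨_, _, h2'⟩
        · rw [dAt_QDirs_peak hl hm2] at h2'; exact Bool.noConfusion h2'
        · have e : off S' l + 1 - 1 = off S' l := by omega
          rw [e, dAt_QDirs_off (le_of_lt hl)] at h2'
          exact absurd h2' (by decide)
    -- Case GL : q = off S n + 1 : impossible since q < off S n + 1
    · omega

end Walk

section Phi

variable (S S' : Finset (Fin n))

/-- The canonical position map between `QDirs n S` and `QDirs n S'`. -/
def Phi : ℕ → ℕ
  | 0 => 0
  | q + 1 => if dAt (QDirs n S) q = dAt (QDirs n S') (Phi q) then Phi q + 1 else Phi q - 1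

variable {S S'}

lemma phi_trans (hsub : ∀ l, ∀ hl : l < n, ⟨l, hl⟩ ∈ S → ⟨l, hl⟩ ∈ S')
    {q : ℕ} (hq : q < off S n + 1) (hg : Good S S' q (Phi S S' q)) :
    Good S S' (q+1) (Phi S S' (q+1)) ∧ StepAt S S' (Phi S S') q := by
  have hrec : Phi S S' (q+1) =
      if dAt (QDirs n S) q = dAt (QDirs n S') (Phi S S' q) then Phi S S' q + 1
      else Phi S S' q - 1 := rfl
  rcases hg with ⟨hq0, hp⟩ | ⟨l, hl, hqe, hp, hInc⟩ | ⟨l, hl, hmem, hqe, hp, hInc⟩ |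
    ⟨l, hl, hm1, hm2, hqe, hp, hInc⟩ | ⟨l, hl, hm1, hm2, hqe, hp, hInc⟩ | ⟨hqe, hp, hInc⟩
  -- G0
  · subst hq0
    have hd : dAt (QDirs n S) 0 = true := dAt_QDirs_zero S
    have hd' : dAt (QDirs n S') (Phi S S' 0) = true := by rw [hp]; exact dAt_QDirs_zero S'
    have hnext : Phi S S' 1 = 1 := by rw [hrec, hd, hd', if_pos rfl, hp]
    constructor
    · exact Or.inr (Or.inl ⟨0, Nat.zero_le n, rfl, by rw [hnext]; rfl, by intro l hl h; omega⟩)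
    · exact Or.inl ⟨by rw [hnext, hp], by rw [hd, hd']⟩
  -- GB
  · subst hqe
    have hd : dAt (QDirs n S) (off S l) = true := dAt_QDirs_off hl
    have hd' : dAt (QDirs n S') (Phi S S' (off S l)) = true := by
      rw [hp]; exact dAt_QDirs_off hl
    have hnext : Phi S S' (off S l + 1) = off S' l + 1 := by
      rw [hrec, hd, hd', if_pos rfl, hp]
    have hstep : StepAt S S' (Phi S S') (off S l) :=
      Or.inl ⟨by rw [hnext, hp], by rw [hd, hd']⟩
    refine ⟨?_, hstep⟩
    rcases eq_or_lt_of_le hl with hln | hln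
    · subst hln
      exact Or.inr (Or.inr (Or.inr (Or.inr (Or.inr ⟨rfl, by rw [hnext], hInc⟩))))
    · by_cases hmem : ⟨l, hln⟩ ∈ S
      · have hmem' : ⟨l, hln⟩ ∈ S' := hsub l hln hmem
        refine Or.inr (Or.inl ⟨l+1, hln, (off_succ_of_mem hln hmem).symm, ?_, ?_⟩)
        · rw [hnext, off_succ_of_mem hln hmem']
        · intro l' hl' hlt hmS
          rcases Nat.lt_succ_iff_lt_or_eq.mp hlt with h | h
          · exact hInc l' hl' h hmS
          · subst h; exact hmem'
      · exact Or.inr (Or.inr (Or.inl ⟨l, hln, hmem, rfl, hnext, hInc⟩))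
  -- GP
  · subst hqe
    have hd : dAt (QDirs n S) (off S l + 1) = false := dAt_QDirs_peak hl hmem
    by_cases hm' : ⟨l, hl⟩ ∈ S'
    · have hd' : dAt (QDirs n S') (off S' l + 1) = true := by
        rw [← off_succ_of_mem hl hm']; exact dAt_QDirs_off hl
      have hd'' : dAt (QDirs n S') (Phi S S' (off S l + 1)) = true := by rw [hp]; exact hd'
      have hnext : Phi S S' (off S l + 1 + 1) = off S' l := by
        rw [hrec, hd, hd'', if_neg (by simp)]
        rw [hp]
        omega
      have e : off S' l + 1 - 1 = off S' l := by omega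
      refine ⟨Or.inr (Or.inr (Or.inr (Or.inl ⟨l, hl, hmem, hm', rfl, hnext, hInc⟩))),
        Or.inr ⟨by rw [hp]; omega, by rw [hnext, hp]; omega, ?_⟩⟩
      rw [hp, hd, e, dAt_QDirs_off (le_of_lt hl)]
      rfl
    · have hd' : dAt (QDirs n S') (off S' l + 1) = false := dAt_QDirs_peak hl hm'
      have hd'' : dAt (QDirs n S') (Phi S S' (off S l + 1)) = false := by rw [hp]; exact hd'
      have hnext : Phi S S' (off S l + 1 + 1) = off S' l + 2 := by
        rw [hrec, hd, hd'', if_pos rfl, hp]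
      refine ⟨Or.inr (Or.inr (Or.inr (Or.inr (Or.inl
          ⟨l, hl, hmem, hm', rfl, hnext, hInc⟩)))),
        Or.inl ⟨by rw [hnext, hp], by rw [hd, hd'']⟩⟩
  -- GV1
  · subst hqe
    have hd : dAt (QDirs n S) (off S l + 2) = true := dAt_QDirs_valley hl hm1
    have hd'' : dAt (QDirs n S') (Phi S S' (off S l + 2)) = true := by
      rw [hp]; exact dAt_QDirs_off (le_of_lt hl)
    have hnext : Phi S S' (off S l + 2 + 1) = off S' l + 1 := by
      rw [hrec, hd, hd'', if_pos rfl, hp]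
    have hoff3 : off S (l+1) = off S l + 3 := off_succ_of_not_mem hl hm1
    refine ⟨Or.inr (Or.inl ⟨l+1, hl, by rw [hoff3], ?_, ?_⟩),
      Or.inl ⟨by rw [hnext, hp], by rw [hd, hd'']⟩⟩
    · rw [hnext, off_succ_of_mem hl hm2]
    · intro l' hl' hlt hmS
      rcases Nat.lt_succ_iff_lt_or_eq.mp hlt with h | h
      · exact hInc l' hl' h hmS
      · exfalso; subst h; exact hm1 hmS
  -- GV2
  · subst hqe
    have hd : dAt (QDirs n S) (off S l + 2) = true := dAt_QDirs_valley hl hm1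
    have hd'' : dAt (QDirs n S') (Phi S S' (off S l + 2)) = true := by
      rw [hp]; exact dAt_QDirs_valley hl hm2
    have hnext : Phi S S' (off S l + 2 + 1) = off S' l + 3 := by
      rw [hrec, hd, hd'', if_pos rfl, hp]
    have hoff3 : off S (l+1) = off S l + 3 := off_succ_of_not_mem hl hm1
    have hoff3' : off S' (l+1) = off S' l + 3 := off_succ_of_not_mem hl hm2
    refine ⟨Or.inr (Or.inl ⟨l+1, hl, by rw [hoff3], by rw [hnext, hoff3'], ?_⟩),
      Or.inl ⟨by rw [hnext, hp], by rw [hd, hd'']⟩⟩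
    intro l' hl' hlt hmS
    rcases Nat.lt_succ_iff_lt_or_eq.mp hlt with h | h
    · exact hInc l' hl' h hmS
    · exfalso; subst h; exact hm1 hmS
  -- GL
  · omega

/-- Existence: under inclusion, the canonical map is an admissible position map. -/
theorem main1 (hsub : ∀ l, ∀ hl : l < n, ⟨l, hl⟩ ∈ S → ⟨l, hl⟩ ∈ S') :
    (∀ q, q ≤ off S n + 1 → Good S S' q (Phi S S' q)) ∧ StepRel S S' (Phi S S') := by
  have hgood : ∀ q, q ≤ off S n + 1 → Good S S' q (Phi S S' q) := by
    intro q
    induction q with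
    | zero => intro _; exact Or.inl ⟨rfl, rfl⟩
    | succ q ih =>
      intro hq1
      exact (phi_trans hsub (by omega) (ih (by omega))).1
  exact ⟨hgood, fun j hj => (phi_trans hsub hj (hgood j (le_of_lt hj))).2⟩

lemma off_ne_zig_one {l l' : ℕ} (hl' : l' < n) (hm : ⟨l', hl'⟩ ∉ S) :
    off S l ≠ off S l' + 1 := by
  intro h
  rcases le_or_gt l l' with hle | hlt
  · have := off_mono S hle; omega
  · have := off_mono S (show l' + 1 ≤ l from hlt)
    rw [off_succ_of_not_mem hl' hm] at this; omega

/-- The invariant pins down the image position at the end of the path. -/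
lemma good_top {p : ℕ} (h : Good S S' (off S n + 1) p) :
    p = off S' n + 1 ∧ Incl S S' n := by
  rcases h with ⟨hq, _⟩ | ⟨l, hl, hq, _, _⟩ | ⟨l, hl, _, hq, _, _⟩ |
      ⟨l, hl, hm1, _, hq, _, _⟩ | ⟨l, hl, hm1, _, hq, _, _⟩ | ⟨_, hp, hInc⟩
  · exfalso; have := off_pos S n; omega
  · exfalso; have := off_mono S hl; omega
  · exfalso; have := off_strictMono S hl; omega
  · exfalso
    have h3 := off_succ_of_not_mem hl hm1
    have := off_mono S (show l + 1 ≤ n from hl); omega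
  · exfalso
    have h3 := off_succ_of_not_mem hl hm1
    have := off_mono S (show l + 1 ≤ n from hl); omega
  · exact ⟨hp, hInc⟩

/-- Functionality of the invariant: the image position is determined. -/
lemma good_unique {q p p' : ℕ} (h : Good S S' q p) (h' : Good S S' q p') : p = p' := by
  have hinj := (off_strictMono S).injective
  rcases h with ⟨hq, hp⟩ | ⟨l, hl, hq, hp, _⟩ | ⟨l, hl, hm, hq, hp, _⟩ |
      ⟨l, hl, hm1, hm2, hq, hp, _⟩ | ⟨l, hl, hm1, hm2, hq, hp, _⟩ | ⟨hq, hp, _⟩ <;>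
    subst hq <;>
    rcases h' with ⟨hq', hp'⟩ | ⟨l', hl', hq', hp', _⟩ | ⟨l', hl', hm', hq', hp', _⟩ |
      ⟨l', hl', hm1', hm2', hq', hp', _⟩ | ⟨l', hl', hm1', hm2', hq', hp', _⟩ | ⟨hq', hp', _⟩
  -- q = 0 row
  · omega
  · exfalso; have := off_pos S l'; omega
  · exfalso; have := off_pos S l'; omega
  · exfalso; have := off_pos S l'; omega
  · exfalso; have := off_pos S l'; omega
  · exfalso; have := off_pos S n; omega
  -- q = off S l row
  · exfalso; have := off_pos S l; omega
  · have : l = l' := hinj hq'; subst this; omega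
  · exact absurd hq' (off_ne_zig_one hl' hm')
  · exact absurd hq' (off_ne_peak_succ hl' hm1' l)
  · exact absurd hq' (off_ne_peak_succ hl' hm1' l)
  · exfalso; have := off_mono S hl; omega
  -- q = off S l + 1 row
  · exfalso; have := off_pos S l; omega
  · exact absurd hq'.symm (off_ne_zig_one hl hm)
  · have : l = l' := hinj (by omega); subst this; omega
  · exact absurd (show off S l = off S l' + 1 by omega) (off_ne_zig_one hl' hm1')
  · exact absurd (show off S l = off S l' + 1 by omega) (off_ne_zig_one hl' hm1')
  · exfalso; have := off_strictMono S hl; omega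
  -- q = off S l + 2 row (GV1)
  · exfalso; have := off_pos S l; omega
  · exact absurd hq'.symm (off_ne_peak_succ hl hm1 l')
  · exact absurd (show off S l' = off S l + 1 by omega) (off_ne_zig_one hl hm1)
  · have : l = l' := hinj (by omega); subst this; omega
  · have : l = l' := hinj (by omega); subst this; exact absurd hm2 hm2'
  · exfalso
    have h3 := off_succ_of_not_mem hl hm1
    have := off_mono S (show l + 1 ≤ n from hl); omega
  -- q = off S l + 2 row (GV2)
  · exfalso; have := off_pos S l; omega
  · exact absurd hq'.symm (off_ne_peak_succ hl hm1 l')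
  · exact absurd (show off S l' = off S l + 1 by omega) (off_ne_zig_one hl hm1)
  · have : l = l' := hinj (by omega); subst this; exact absurd hm2' hm2
  · have : l = l' := hinj (by omega); subst this; omega
  · exfalso
    have h3 := off_succ_of_not_mem hl hm1
    have := off_mono S (show l + 1 ≤ n from hl); omega
  -- q = off S n + 1 row
  · exfalso; have := off_pos S n; omega
  · exfalso; have := off_mono S hl'; omega
  · exfalso; have := off_strictMono S hl'; omega
  · exfalso
    have h3 := off_succ_of_not_mem hl' hm1'
    have := off_mono S (show l' + 1 ≤ n from hl'); omega
  · exfalso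
    have h3 := off_succ_of_not_mem hl' hm1'
    have := off_mono S (show l' + 1 ≤ n from hl'); omega
  · omega

end Phi

lemma dAt_eq_getElem {ds : List Bool} {q : ℕ} (h : q < ds.length) : dAt ds q = ds[q] :=
  List.getD_eq_getElem ds true h

lemma get_eq_dAt {ds : List Bool} {i : ℕ} (hi : i < ds.length) :
    ds.get ⟨i, hi⟩ = dAt ds i := by
  rw [List.get_eq_getElem, dAt_eq_getElem hi]

section DVertPart

variable {D : Type} [DecidableEq D] {n : ℕ} {R : Set (Fin n → D)}

def Sof (d : D) (r : Fin n → D) : Finset (Fin n) := Finset.univ.filter fun i => d = r i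

lemma pathDirs_eq (d : D) (r : Fin n → D) : pathDirs d r = QDirs n (Sof d r) := rfl

lemma mem_Sof {d : D} {r : Fin n → D} {i : Fin n} : i ∈ Sof d r ↔ d = r i := by
  simp [Sof]

lemma length_pathDirs (d : D) (r : Fin n → D) :
    (pathDirs d r).length = off (Sof d r) n + 1 := length_QDirs _

lemma length_pathDirs_pos (d : D) (r : Fin n → D) : 2 ≤ (pathDirs d r).length := by
  rw [length_pathDirs]; have := off_pos (Sof d r) n; omega

lemma pathVert_zero (d : D) (t : Fin n → D) (ht : t ∈ R) :
    pathVert d t ht 0 = Sum.inl d := rfl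

lemma pathVert_of_ge {d : D} {t : Fin n → D} {ht : t ∈ R} {j : ℕ}
    (h : (pathDirs d t).length ≤ j) :
    pathVert d t ht j = Sum.inr (Sum.inl ⟨t, ht⟩) := by
  have h2 := length_pathDirs_pos d t
  unfold pathVert
  exact (dif_neg (show ¬ j = 0 by omega)).trans (dif_pos h)

lemma pathVert_of_lt {d : D} {t : Fin n → D} {ht : t ∈ R} {j : ℕ}
    (h0 : 0 < j) (hl : j < (pathDirs d t).length) :
    pathVert d t ht j = Sum.inr (Sum.inr ⟨d, t, ht, j, h0, hl⟩) := by
  unfold pathVert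
  exact (dif_neg (show ¬ j = 0 by omega)).trans
    (dif_neg (show ¬ (pathDirs d t).length ≤ j by omega))

lemma pathVert_eq_inl {d : D} {t : Fin n → D} {ht : t ∈ R} {j : ℕ} {e : D}
    (h : pathVert d t ht j = Sum.inl e) : j = 0 ∧ d = e := by
  rcases Nat.eq_zero_or_pos j with rfl | h0
  · rw [pathVert_zero] at h
    exact ⟨rfl, Sum.inl.inj h⟩
  · exfalso
    rcases lt_or_ge j (pathDirs d t).length with hl | hg
    · rw [pathVert_of_lt h0 hl] at h; cases h
    · rw [pathVert_of_ge hg] at h; cases h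

lemma pathVert_eq_top {d : D} {t : Fin n → D} {ht : t ∈ R} {j : ℕ}
    {s' : {x : Fin n → D // x ∈ R}}
    (h : pathVert d t ht j = Sum.inr (Sum.inl s')) :
    (pathDirs d t).length ≤ j ∧ s' = ⟨t, ht⟩ := by
  rcases Nat.eq_zero_or_pos j with rfl | h0
  · rw [pathVert_zero] at h; exact absurd h (by simp)
  · rcases lt_or_ge j (pathDirs d t).length with hl | hg
    · rw [pathVert_of_lt h0 hl] at h
      exact absurd (Sum.inr.inj h) (by simp)
    · rw [pathVert_of_ge hg] at h
      exact ⟨hg, (Sum.inl.inj (Sum.inr.inj h)).symm⟩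

lemma pathVert_eq_inner {d : D} {t : Fin n → D} {ht : t ∈ R} {j : ℕ}
    {iv : InnerVert D n R}
    (h : pathVert d t ht j = Sum.inr (Sum.inr iv)) :
    iv.d = d ∧ iv.r = t ∧ iv.j = j ∧ 0 < j ∧ j < (pathDirs d t).length := by
  rcases Nat.eq_zero_or_pos j with rfl | h0
  · rw [pathVert_zero] at h; exact absurd h (by simp)
  · rcases lt_or_ge j (pathDirs d t).length with hl | hg
    · rw [pathVert_of_lt h0 hl] at h
      have := (Sum.inr.inj (Sum.inr.inj h)).symm
      subst this
      exact ⟨rfl, rfl, rfl, h0, hl⟩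
    · rw [pathVert_of_ge hg] at h
      exact absurd (Sum.inr.inj h) (by simp)

/-- The level of a vertex of `𝒟(R)`. -/
def Lv : DVert D n R → ℤ
  | Sum.inl _ => 0
  | Sum.inr (Sum.inl _) => (n : ℤ) + 2
  | Sum.inr (Sum.inr iv) => lvl (pathDirs iv.d iv.r) iv.j

lemma Lv_pathVert {d : D} {t : Fin n → D} {ht : t ∈ R} {j : ℕ}
    (hj : j ≤ (pathDirs d t).length) :
    Lv (pathVert d t ht j) = lvl (pathDirs d t) j := by
  rcases Nat.eq_zero_or_pos j with rfl | h0
  · rw [pathVert_zero, lvl_zero]; rfl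
  · rcases eq_or_lt_of_le hj with he | hl
    · rw [he, pathVert_of_ge (le_refl _)]
      show ((n : ℤ) + 2) = _
      rw [pathDirs_eq, length_QDirs, lvl_QDirs_top]
    · rw [pathVert_of_lt h0 hl]; rfl

lemma DEdge_intro_t {d : D} {t : Fin n → D} {ht : t ∈ R} {i : ℕ}
    (hi : i < (pathDirs d t).length) (hd : dAt (pathDirs d t) i = true) :
    DEdge (pathVert d t ht i) (pathVert d t ht (i+1)) := by
  refine ⟨d, t, ht, i, hi, ?_⟩
  rw [get_eq_dAt hi, hd, if_pos rfl]
  exact ⟨rfl, rfl⟩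

lemma DEdge_intro_f {d : D} {t : Fin n → D} {ht : t ∈ R} {i : ℕ}
    (hi : i < (pathDirs d t).length) (hd : dAt (pathDirs d t) i = false) :
    DEdge (pathVert d t ht (i+1)) (pathVert d t ht i) := by
  refine ⟨d, t, ht, i, hi, ?_⟩
  rw [get_eq_dAt hi, hd, if_neg (by simp)]
  exact ⟨rfl, rfl⟩

lemma DEdge_elim {a b : DVert D n R} (hE : DEdge a b) :
    ∃ (e : D) (s : Fin n → D) (hs : s ∈ R) (i : ℕ), i < (pathDirs e s).length ∧
      ((dAt (pathDirs e s) i = true ∧ a = pathVert e s hs i ∧ b = pathVert e s hs (i+1)) ∨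
       (dAt (pathDirs e s) i = false ∧ a = pathVert e s hs (i+1) ∧ b = pathVert e s hs i)) := by
  obtain ⟨e, s, hs, i, hi, hc⟩ := hE
  refine ⟨e, s, hs, i, hi, ?_⟩
  rw [get_eq_dAt hi] at hc
  cases hd : dAt (pathDirs e s) i
  · rw [hd, if_neg (by simp)] at hc; exact Or.inr ⟨rfl, hc⟩
  · rw [hd, if_pos rfl] at hc; exact Or.inl ⟨rfl, hc⟩

lemma DEdge_Lv {a b : DVert D n R} (hE : DEdge a b) : Lv b = Lv a + 1 := by
  obtain ⟨e, s, hs, i, hi, hc⟩ := DEdge_elim hE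
  rcases hc with ⟨hd, ha, hb⟩ | ⟨hd, ha, hb⟩ <;> subst ha <;> subst hb <;>
    rw [Lv_pathVert (le_of_lt hi), Lv_pathVert (by omega), lvl_succ hi, hd] <;> simp

lemma Lv_bounds (v : DVert D n R) : 0 ≤ Lv v ∧ Lv v ≤ (n : ℤ) + 2 := by
  rcases v with e | s' | iv
  · show (0:ℤ) ≤ 0 ∧ (0:ℤ) ≤ (n:ℤ) + 2
    constructor <;> omega
  · show (0:ℤ) ≤ (n:ℤ) + 2 ∧ ((n:ℤ) + 2) ≤ (n:ℤ) + 2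
    constructor <;> omega
  · have hlen := iv.hjlen
    rw [length_pathDirs] at hlen
    have := lvl_QDirs_bounds (Sof iv.d iv.r) iv.hj0 hlen
    have hLv : Lv (Sum.inr (Sum.inr iv)) = lvl (QDirs n (Sof iv.d iv.r)) iv.j := rfl
    rw [hLv]
    constructor <;> omega

lemma Lv_inner_bounds (iv : InnerVert D n R) :
    1 ≤ Lv (Sum.inr (Sum.inr iv)) ∧ Lv (Sum.inr (Sum.inr iv)) ≤ (n : ℤ) + 1 := by
  have hlen := iv.hjlen
  rw [length_pathDirs] at hlen
  have := lvl_QDirs_bounds (Sof iv.d iv.r) iv.hj0 hlen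
  have hLv : Lv (Sum.inr (Sum.inr iv)) = lvl (QDirs n (Sof iv.d iv.r)) iv.j := rfl
  rw [hLv]
  exact this

lemma eq_inl_of_Lv_zero {v : DVert D n R} (h : Lv v = 0) : ∃ e, v = Sum.inl e := by
  rcases v with e | s' | iv
  · exact ⟨e, rfl⟩
  · exfalso; have : ((n:ℤ) + 2) = 0 := h; omega
  · exfalso; have := (Lv_inner_bounds iv).1; omega

lemma eq_top_of_Lv_top {v : DVert D n R} (h : Lv v = (n : ℤ) + 2) :
    ∃ s', v = Sum.inr (Sum.inl s') := by
  rcases v with e | s' | iv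
  · exfalso; have : (0:ℤ) = (n:ℤ) + 2 := h; omega
  · exact ⟨s', rfl⟩
  · exfalso; have := (Lv_inner_bounds iv).2; omega

end DVertPart

section Conn

variable {D : Type} [DecidableEq D] {n : ℕ} {R : Set (Fin n → D)}

lemma InnerVert_ext {iv iv' : InnerVert D n R} (h1 : iv.d = iv'.d) (h2 : iv.r = iv'.r)
    (h3 : iv.j = iv'.j) : iv = iv' := by
  cases iv; cases iv'
  simp only at h1 h2 h3
  subst h1; subst h2; subst h3
  rfl

lemma weakReach_pathVert (d : D) (t : Fin n → D) (ht : t ∈ R) (j : ℕ) :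
    WeakReach DEdge (Sum.inl d) (pathVert d t ht j) := by
  induction j with
  | zero =>
    rw [pathVert_zero]
    exact Relation.ReflTransGen.refl
  | succ j ih =>
    rcases lt_or_ge j (pathDirs d t).length with hl | hg
    · refine Relation.ReflTransGen.tail ih ?_
      cases hd : dAt (pathDirs d t) j
      · exact Or.inr (DEdge_intro_f hl hd)
      · exact Or.inl (DEdge_intro_t hl hd)
    · rw [pathVert_of_ge (by omega)]
      rw [pathVert_of_ge hg] at ih
      exact ih

lemma weakReach_symm {a b : DVert D n R} (hw : WeakReach DEdge a b) :
    WeakReach DEdge b a :=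
  (@Relation.ReflTransGen.symmetric _ (fun a b => DEdge a b ∨ DEdge b a)
    ⟨fun _ _ hxy => Or.symm hxy⟩).symm _ _ hw

lemma weakReach_conn (d₀ : D) {t₀ : Fin n → D} (ht₀ : t₀ ∈ R) (v : DVert D n R) :
    WeakReach DEdge (Sum.inl d₀) v := by
  have key : ∀ e : D, WeakReach (DEdge (R := R)) (Sum.inl e)
      (Sum.inr (Sum.inl ⟨t₀, ht₀⟩)) := by
    intro e
    have hw := weakReach_pathVert e t₀ ht₀ (pathDirs e t₀).length
    rwa [pathVert_of_ge (le_refl _)] at hw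
  rcases v with e | s' | iv
  · exact (key d₀).trans (weakReach_symm (key e))
  · obtain ⟨s, hs⟩ := s'
    have hw := weakReach_pathVert d₀ s hs (pathDirs d₀ s).length
    rwa [pathVert_of_ge (le_refl _)] at hw
  · have h1 := weakReach_pathVert iv.d iv.r iv.hr iv.j
    rw [pathVert_of_lt iv.hj0 iv.hjlen] at h1
    exact ((key d₀).trans (weakReach_symm (key iv.d))).trans h1

lemma hom_diff {h : DVert D n R → DVert D n R} (hh : IsDigraphHom DEdge DEdge h)
    {a b : DVert D n R} (hw : WeakReach DEdge a b) :
    Lv (h b) - Lv b = Lv (h a) - Lv a := by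
  have hw' : Relation.ReflTransGen (fun x y => DEdge x y ∨ DEdge y x) a b := hw
  clear hw
  induction hw' with
  | refl => rfl
  | tail hab hstep ih =>
    rcases hstep with hE | hE
    · have h1 := DEdge_Lv hE
      have h2 := DEdge_Lv (hh _ _ hE)
      omega
    · have h1 := DEdge_Lv hE
      have h2 := DEdge_Lv (hh _ _ hE)
      omega

theorem hom_Lv {h : DVert D n R → DVert D n R} (hh : IsDigraphHom DEdge DEdge h)
    (d₀ : D) {t₀ : Fin n → D} (ht₀ : t₀ ∈ R) (v : DVert D n R) :
    Lv (h v) = Lv v := by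
  have hdiff : ∀ w, Lv (h w) - Lv w = Lv (h (Sum.inl d₀)) - Lv (Sum.inl d₀) :=
    fun w => hom_diff hh (weakReach_conn d₀ ht₀ w)
  have h1 := (Lv_bounds (h (Sum.inl d₀))).1
  have h2 := (Lv_bounds (h (Sum.inr (Sum.inl ⟨t₀, ht₀⟩)))).2
  have e1 := hdiff (Sum.inr (Sum.inl ⟨t₀, ht₀⟩))
  have e2 := hdiff v
  have hL0 : Lv (R := R) (Sum.inl d₀) = 0 := rfl
  have hLt : Lv (R := R) (Sum.inr (Sum.inl ⟨t₀, ht₀⟩)) = (n : ℤ) + 2 := rfl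
  rw [hL0] at e1 e2
  rw [hLt] at e1
  omega

lemma hom_inl_img {h : DVert D n R → DVert D n R} (hlev : ∀ v, Lv (h v) = Lv v)
    (e : D) : ∃ e', h (Sum.inl e) = Sum.inl e' :=
  eq_inl_of_Lv_zero ((hlev _).trans rfl)

lemma hom_top_img {h : DVert D n R → DVert D n R} (hlev : ∀ v, Lv (h v) = Lv v)
    (s' : {x : Fin n → D // x ∈ R}) :
    ∃ s'', h (Sum.inr (Sum.inl s')) = Sum.inr (Sum.inl s'') :=
  eq_top_of_Lv_top ((hlev _).trans rfl)

lemma DEdge_inl_inner {e : D} {iv : InnerVert D n R}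
    (hE : DEdge (Sum.inl e) (Sum.inr (Sum.inr iv))) : iv.d = e ∧ iv.j = 1 := by
  obtain ⟨e₂, s, hs, i, hi, hc⟩ := DEdge_elim hE
  rcases hc with ⟨hd, ha, hb⟩ | ⟨hd, ha, hb⟩
  · obtain ⟨hi0, hde⟩ := pathVert_eq_inl ha.symm
    subst hi0
    obtain ⟨h1, _, h3, _, _⟩ := pathVert_eq_inner hb.symm
    exact ⟨h1.trans hde, h3⟩
  · obtain ⟨hi0, _⟩ := pathVert_eq_inl ha.symm
    omega

lemma DEdge_inner_inner {iv iv' : InnerVert D n R}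
    (hE : DEdge (Sum.inr (Sum.inr iv)) (Sum.inr (Sum.inr iv'))) :
    iv'.d = iv.d ∧ iv'.r = iv.r ∧
      ((iv'.j = iv.j + 1 ∧ dAt (pathDirs iv.d iv.r) iv.j = true) ∨
       (iv.j = iv'.j + 1 ∧ dAt (pathDirs iv.d iv.r) iv'.j = false)) := by
  obtain ⟨e, s, hs, i, hi, hc⟩ := DEdge_elim hE
  rcases hc with ⟨hd, ha, hb⟩ | ⟨hd, ha, hb⟩
  · obtain ⟨had, har, haj, _, _⟩ := pathVert_eq_inner ha.symm
    obtain ⟨hbd, hbr, hbj, _, _⟩ := pathVert_eq_inner hb.symm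
    refine ⟨hbd.trans had.symm, hbr.trans har.symm, Or.inl ⟨by omega, ?_⟩⟩
    rw [had, har, haj]
    exact hd
  · obtain ⟨had, har, haj, _, _⟩ := pathVert_eq_inner ha.symm
    obtain ⟨hbd, hbr, hbj, _, _⟩ := pathVert_eq_inner hb.symm
    refine ⟨hbd.trans had.symm, hbr.trans har.symm, Or.inr ⟨by omega, ?_⟩⟩
    rw [had, har, hbj]
    exact hd

lemma DEdge_inner_top {iv : InnerVert D n R} {s' : {x : Fin n → D // x ∈ R}}
    (hE : DEdge (Sum.inr (Sum.inr iv)) (Sum.inr (Sum.inl s'))) :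
    iv.r = s'.1 ∧ iv.j + 1 = (pathDirs iv.d iv.r).length ∧
      dAt (pathDirs iv.d iv.r) iv.j = true := by
  obtain ⟨e, s, hs, i, hi, hc⟩ := DEdge_elim hE
  rcases hc with ⟨hd, ha, hb⟩ | ⟨hd, ha, hb⟩
  · obtain ⟨had, har, haj, _, _⟩ := pathVert_eq_inner ha.symm
    obtain ⟨hge, hseq⟩ := pathVert_eq_top hb.symm
    have hs'1 : s'.1 = s := by rw [hseq]
    refine ⟨by rw [har, hs'1], ?_, ?_⟩
    · rw [had, har, haj]; omega
    · rw [had, har, haj]; exact hd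
  · obtain ⟨hge, _⟩ := pathVert_eq_top hb.symm
    omega

end Conn

section WalkMain

variable {D : Type} [DecidableEq D] {n : ℕ} {R : Set (Fin n → D)}

/-- Position of a vertex inside a fixed gadget (top vertices get position `L'`). -/
def posOf (L' : ℕ) : DVert D n R → ℕ
  | Sum.inl _ => 0
  | Sum.inr (Sum.inl _) => L'
  | Sum.inr (Sum.inr iv) => iv.j

theorem walk_main {h : DVert D n R → DVert D n R} (hh : IsDigraphHom DEdge DEdge h)
    (hlev : ∀ v, Lv (h v) = Lv v) (d : D) (t : Fin n → D) (ht : t ∈ R)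
    {d' : D} (hd' : h (Sum.inl d) = Sum.inl d')
    {t' : {x : Fin n → D // x ∈ R}}
    (ht' : h (Sum.inr (Sum.inl ⟨t, ht⟩)) = Sum.inr (Sum.inl t')) :
    ∃ ψ : ℕ → ℕ, ψ 0 = 0 ∧ StepRel (Sof d t) (Sof d' t'.1) ψ ∧
      ∀ j, j ≤ off (Sof d t) n + 1 →
        h (pathVert d t ht j) = pathVert d' t'.1 t'.2 (ψ j) := by
  have hoffpos := off_pos (Sof d t) n
  have hoffpos' := off_pos (Sof d' t'.1) n
  have hLen : (pathDirs d t).length = off (Sof d t) n + 1 := length_pathDirs d t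
  have hLen' : (pathDirs d' t'.1).length = off (Sof d' t'.1) n + 1 := length_pathDirs _ _
  have hinner : ∀ j, 0 < j → j < off (Sof d t) n + 1 → ∃ iv : InnerVert D n R,
      h (pathVert d t ht j) = Sum.inr (Sum.inr iv) := by
    intro j h0 hjL
    have hb := lvl_QDirs_bounds (Sof d t) h0 hjL
    have hLv : Lv (h (pathVert d t ht j)) = lvl (QDirs n (Sof d t)) j := by
      rw [hlev, Lv_pathVert (by omega)]; rfl
    rcases hveq : h (pathVert d t ht j) with e | s' | iv
    · exfalso; rw [hveq] at hLv
      have h0' : (0:ℤ) = lvl (QDirs n (Sof d t)) j := hLv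
      omega
    · exfalso; rw [hveq] at hLv
      have h0' : ((n:ℤ) + 2) = lvl (QDirs n (Sof d t)) j := hLv
      omega
    · exact ⟨iv, rfl⟩
  have hstepE : ∀ j, j < off (Sof d t) n + 1 →
      (dAt (pathDirs d t) j = true ∧
        DEdge (h (pathVert d t ht j)) (h (pathVert d t ht (j+1)))) ∨
      (dAt (pathDirs d t) j = false ∧
        DEdge (h (pathVert d t ht (j+1))) (h (pathVert d t ht j))) := by
    intro j hj
    cases hdir : dAt (pathDirs d t) j
    · exact Or.inr ⟨rfl, hh _ _ (DEdge_intro_f (by omega) hdir)⟩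
    · exact Or.inl ⟨rfl, hh _ _ (DEdge_intro_t (by omega) hdir)⟩
  obtain ⟨iv1, hiv1⟩ := hinner 1 one_pos (by omega)
  have hbase : iv1.d = d' ∧ iv1.j = 1 := by
    have hd0 : dAt (pathDirs d t) 0 = true := dAt_QDirs_zero _
    rcases hstepE 0 (by omega) with ⟨_, hE⟩ | ⟨hf, _⟩
    · rw [pathVert_zero, hd'] at hE
      simp only [Nat.zero_add] at hE
      rw [hiv1] at hE
      exact DEdge_inl_inner hE
    · rw [hd0] at hf; exact absurd hf (by simp)
  have hprop : ∀ j, 0 < j → j < off (Sof d t) n + 1 →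
      ∀ iv, h (pathVert d t ht j) = Sum.inr (Sum.inr iv) →
        iv.d = d' ∧ iv.r = iv1.r := by
    intro j
    induction j with
    | zero => omega
    | succ j ih =>
      intro h0 hjL iv hiv
      rcases Nat.eq_zero_or_pos j with rfl | hj0
      · simp only [Nat.zero_add] at hiv
        have heq : iv1 = iv := by
          have := hiv1.symm.trans hiv
          exact Sum.inr.inj (Sum.inr.inj this)
        rw [← heq]
        exact ⟨hbase.1, rfl⟩
      · obtain ⟨ivp, hivp⟩ := hinner j hj0 (by omega)
        obtain ⟨hpd, hpr⟩ := ih hj0 (by omega) ivp hivp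
        rcases hstepE j (by omega) with ⟨_, hE⟩ | ⟨_, hE⟩
        · rw [hivp, hiv] at hE
          obtain ⟨h1, h2, _⟩ := DEdge_inner_inner hE
          exact ⟨h1.trans hpd, h2.trans hpr⟩
        · rw [hivp, hiv] at hE
          obtain ⟨h1, h2, _⟩ := DEdge_inner_inner hE
          exact ⟨h1.symm.trans hpd, h2.symm.trans hpr⟩
  have hpVL : h (pathVert d t ht (off (Sof d t) n + 1)) = Sum.inr (Sum.inl t') := by
    rw [pathVert_of_ge (by omega), ht']
  have hrtop : iv1.r = t'.1 := by
    obtain ⟨ivL, hivL⟩ := hinner (off (Sof d t) n) (by omega) (by omega)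
    obtain ⟨hLd, hLr⟩ := hprop (off (Sof d t) n) (by omega) (by omega) ivL hivL
    have hdL : dAt (pathDirs d t) (off (Sof d t) n) = true := by
      rw [pathDirs_eq]; exact dAt_QDirs_last _
    rcases hstepE (off (Sof d t) n) (by omega) with ⟨_, hE⟩ | ⟨hf, _⟩
    · rw [hpVL, hivL] at hE
      exact hLr.symm.trans (DEdge_inner_top hE).1
    · rw [hdL] at hf; exact absurd hf (by simp)
  refine ⟨fun j => posOf (off (Sof d' t'.1) n + 1) (h (pathVert d t ht j)), ?_, ?_, ?_⟩
  · show posOf _ (h (pathVert d t ht 0)) = 0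
    rw [pathVert_zero, hd']
    rfl
  · -- StepRel
    intro j hjL
    rcases Nat.eq_zero_or_pos j with rfl | hj0
    · refine Or.inl ⟨?_, ?_⟩
      · show posOf _ (h (pathVert d t ht (0+1))) = posOf _ (h (pathVert d t ht 0)) + 1
        simp only [Nat.zero_add]
        rw [hiv1, pathVert_zero, hd']
        show iv1.j = 0 + 1
        have := hbase.2
        omega
      · show dAt (QDirs n (Sof d' t'.1)) (posOf _ (h (pathVert d t ht 0)))
            = dAt (QDirs n (Sof d t)) 0
        rw [pathVert_zero, hd']
        show dAt (QDirs n (Sof d' t'.1)) 0 = dAt (QDirs n (Sof d t)) 0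
        rw [dAt_QDirs_zero, dAt_QDirs_zero]
    · obtain ⟨ivj, hivj⟩ := hinner j hj0 (by omega)
      obtain ⟨hjd, hjr⟩ := hprop j hj0 (by omega) ivj hivj
      have hrr : ivj.r = t'.1 := hjr.trans hrtop
      have hψj : posOf (off (Sof d' t'.1) n + 1) (h (pathVert d t ht j)) = ivj.j := by
        rw [hivj]; rfl
      rcases Nat.lt_or_ge (j+1) (off (Sof d t) n + 1) with hj1L | hj1L
      · obtain ⟨ivj', hivj'⟩ := hinner (j+1) (by omega) hj1L
        have hψj' : posOf (off (Sof d' t'.1) n + 1) (h (pathVert d t ht (j+1))) = ivj'.j := by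
          rw [hivj']; rfl
        rcases hstepE j (by omega) with ⟨hdir, hE⟩ | ⟨hdir, hE⟩
        · rw [hivj, hivj'] at hE
          obtain ⟨g1, g2, hrel⟩ := DEdge_inner_inner hE
          rw [hjd, hrr] at hrel
          rcases hrel with ⟨hj1, hdt⟩ | ⟨hj1, hdt⟩
          · refine Or.inl ⟨?_, ?_⟩
            · show posOf _ (h (pathVert d t ht (j+1))) = posOf _ (h (pathVert d t ht j)) + 1
              rw [hψj, hψj']; omega
            · show dAt (QDirs n (Sof d' t'.1)) (posOf _ (h (pathVert d t ht j)))
                  = dAt (QDirs n (Sof d t)) j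
              rw [hψj]
              exact hdt.trans ((show dAt (QDirs n (Sof d t)) j = true from hdir)).symm
          · refine Or.inr ⟨?_, ?_, ?_⟩
            · show 0 < posOf _ (h (pathVert d t ht j))
              rw [hψj]; omega
            · show posOf _ (h (pathVert d t ht (j+1))) = posOf _ (h (pathVert d t ht j)) - 1
              rw [hψj, hψj']; omega
            · show dAt (QDirs n (Sof d' t'.1)) (posOf _ (h (pathVert d t ht j)) - 1)
                  = !(dAt (QDirs n (Sof d t)) j)
              rw [hψj, show ivj.j - 1 = ivj'.j by omega,
                show dAt (QDirs n (Sof d t)) j = true from hdir]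
              exact hdt
        · rw [hivj, hivj'] at hE
          obtain ⟨g1, g2, hrel⟩ := DEdge_inner_inner hE
          have g1' : ivj'.d = d' := g1.symm.trans hjd
          have g2' : ivj'.r = t'.1 := g2.symm.trans hrr
          rw [g1', g2'] at hrel
          rcases hrel with ⟨hj1, hdt⟩ | ⟨hj1, hdt⟩
          · refine Or.inr ⟨?_, ?_, ?_⟩
            · show 0 < posOf _ (h (pathVert d t ht j))
              rw [hψj]; omega
            · show posOf _ (h (pathVert d t ht (j+1))) = posOf _ (h (pathVert d t ht j)) - 1
              rw [hψj, hψj']; omega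
            · show dAt (QDirs n (Sof d' t'.1)) (posOf _ (h (pathVert d t ht j)) - 1)
                  = !(dAt (QDirs n (Sof d t)) j)
              rw [hψj, show ivj.j - 1 = ivj'.j by omega,
                show dAt (QDirs n (Sof d t)) j = false from hdir]
              exact hdt
          · refine Or.inl ⟨?_, ?_⟩
            · show posOf _ (h (pathVert d t ht (j+1))) = posOf _ (h (pathVert d t ht j)) + 1
              rw [hψj, hψj']; omega
            · show dAt (QDirs n (Sof d' t'.1)) (posOf _ (h (pathVert d t ht j)))
                  = dAt (QDirs n (Sof d t)) j
              rw [hψj]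
              exact hdt.trans ((show dAt (QDirs n (Sof d t)) j = false from hdir)).symm
      · -- the last step of the walk, into the top vertex
        have hjeq : j + 1 = off (Sof d t) n + 1 := by omega
        have hdL : dAt (pathDirs d t) j = true := by
          rw [pathDirs_eq, show j = off (Sof d t) n by omega]
          exact dAt_QDirs_last _
        rcases hstepE j (by omega) with ⟨_, hE⟩ | ⟨hf, _⟩
        swap
        · rw [hdL] at hf; exact absurd hf (by simp)
        rw [hivj, hjeq, hpVL] at hE
        obtain ⟨_, hlen, hdt⟩ := DEdge_inner_top hE
        rw [hjd, hrr] at hlen hdt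
        rw [hLen'] at hlen
        refine Or.inl ⟨?_, ?_⟩
        · show posOf _ (h (pathVert d t ht (j+1))) = posOf _ (h (pathVert d t ht j)) + 1
          rw [hjeq, hpVL, hψj]
          show off (Sof d' t'.1) n + 1 = ivj.j + 1
          omega
        · show dAt (QDirs n (Sof d' t'.1)) (posOf _ (h (pathVert d t ht j)))
              = dAt (QDirs n (Sof d t)) j
          rw [hψj, show ivj.j = off (Sof d' t'.1) n by omega]
          exact (dAt_QDirs_last _).trans
            ((show dAt (QDirs n (Sof d t)) j = true from hdL)).symm
  · -- pointwise description of the image of the walk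
    intro j hjL
    show h (pathVert d t ht j)
        = pathVert d' t'.1 t'.2 (posOf (off (Sof d' t'.1) n + 1) (h (pathVert d t ht j)))
    rcases Nat.eq_zero_or_pos j with rfl | hj0
    · rw [pathVert_zero, hd']
      rfl
    · rcases eq_or_lt_of_le hjL with hje | hjlt
      · subst hje
        rw [hpVL]
        rw [show posOf (off (Sof d' t'.1) n + 1) (Sum.inr (Sum.inl t') : DVert D n R)
            = off (Sof d' t'.1) n + 1 from rfl]
        rw [pathVert_of_ge (by omega)]
      · obtain ⟨ivj, hivj⟩ := hinner j hj0 hjlt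
        obtain ⟨hjd, hjr⟩ := hprop j hj0 hjlt ivj hivj
        have hrr : ivj.r = t'.1 := hjr.trans hrtop
        rw [hivj]
        have hb0 := ivj.hj0
        have hbl := ivj.hjlen
        rw [hjd, hrr] at hbl
        show Sum.inr (Sum.inr ivj) = pathVert d' t'.1 t'.2 ivj.j
        rw [pathVert_of_lt hb0 hbl]
        exact congrArg (fun x => Sum.inr (Sum.inr x))
          (InnerVert_ext hjd hrr rfl)

end WalkMain

section Ext

lemma good_lt_top {S S' : Finset (Fin n)} {q p : ℕ} (hq : q < off S n + 1)
    (hgood : Good S S' q p) : p < off S' n + 1 := by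
  rcases hgood with ⟨_, hp⟩ | ⟨l, hl, _, hp, _⟩ | ⟨l, hl, _, _, hp, _⟩ |
      ⟨l, hl, _, _, _, hp, _⟩ | ⟨l, hl, _, hm2, _, hp, _⟩ | ⟨hq', _, _⟩
  · have := off_pos S' n; omega
  · have := off_mono S' hl; omega
  · have h1 := off_lt_succ S' l
    have h2 := off_mono S' (show l + 1 ≤ n from hl)
    omega
  · have := off_mono S' (le_of_lt hl); omega
  · have h3 := off_succ_of_not_mem hl hm2
    have := off_mono S' (show l + 1 ≤ n from hl)
    omega
  · omega

variable {D : Type} [DecidableEq D] {n : ℕ} {R : Set (Fin n → D)}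

lemma Sof_sub (g : D → D) (e : D) (s : Fin n → D) :
    ∀ l, ∀ hl : l < n, ⟨l, hl⟩ ∈ Sof e s → ⟨l, hl⟩ ∈ Sof (g e) (fun i => g (s i)) := by
  intro l hl hm
  rw [mem_Sof] at hm ⊢
  exact congrArg g hm

/-- The canonical extension of a unary polymorphism to the digraph `𝒟(R)`. -/
def hExt (g : D → D) (hg : IsUnaryPolymorphism R g) : DVert D n R → DVert D n R
  | Sum.inl e => Sum.inl (g e)
  | Sum.inr (Sum.inl s') => Sum.inr (Sum.inl ⟨fun i => g (s'.1 i), hg s'.1 s'.2⟩)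
  | Sum.inr (Sum.inr iv) =>
      pathVert (g iv.d) (fun i => g (iv.r i)) (hg iv.r iv.hr)
        (Phi (Sof iv.d iv.r) (Sof (g iv.d) (fun i => g (iv.r i))) iv.j)

lemma hExt_pathVert (g : D → D) (hg : IsUnaryPolymorphism R g) (e : D) (s : Fin n → D)
    (hs : s ∈ R) : ∀ j, j ≤ off (Sof e s) n + 1 →
    hExt g hg (pathVert e s hs j)
      = pathVert (g e) (fun i => g (s i)) (hg s hs)
          (Phi (Sof e s) (Sof (g e) (fun i => g (s i))) j) := by
  intro j hj
  have hLen := length_pathDirs e s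
  have hLen' := length_pathDirs (g e) (fun i => g (s i))
  rcases Nat.eq_zero_or_pos j with rfl | h0
  · rw [pathVert_zero]
    show Sum.inl (g e) = _
    rw [show Phi (Sof e s) (Sof (g e) (fun i => g (s i))) 0 = 0 from rfl, pathVert_zero]
  · rcases eq_or_lt_of_le hj with hje | hjlt
    · subst hje
      have hsub := Sof_sub g e s
      have hPhiTop : Phi (Sof e s) (Sof (g e) (fun i => g (s i))) (off (Sof e s) n + 1)
          = off (Sof (g e) (fun i => g (s i))) n + 1 :=
        (good_top (((main1 hsub).1) _ (le_refl _))).1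
      rw [pathVert_of_ge (show (pathDirs e s).length ≤ off (Sof e s) n + 1 by omega),
        hPhiTop, pathVert_of_ge (by omega)]
      rfl
    · rw [pathVert_of_lt h0 (by omega)]
      rfl

theorem hExt_hom (g : D → D) (hg : IsUnaryPolymorphism R g) :
    IsDigraphHom DEdge DEdge (hExt g hg) := by
  intro a b hE
  obtain ⟨e, s, hs, i, hi, hc⟩ := DEdge_elim hE
  have hLen := length_pathDirs e s
  have hLen' := length_pathDirs (g e) (fun i => g (s i))
  have hsub := Sof_sub g e s
  obtain ⟨hgood, hstep⟩ := main1 (S := Sof e s) (S' := Sof (g e) (fun i => g (s i))) hsub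
  have hiL : i < off (Sof e s) n + 1 := by omega
  have hpi_lt : Phi (Sof e s) (Sof (g e) (fun i => g (s i))) i
      < off (Sof (g e) (fun i => g (s i))) n + 1 :=
    good_lt_top hiL (hgood i (le_of_lt hiL))
  have hwalk := hExt_pathVert g hg e s hs
  rcases hc with ⟨hdir, ha, hb⟩ | ⟨hdir, ha, hb⟩
  · subst ha; subst hb
    rw [hwalk i (by omega), hwalk (i+1) (by omega)]
    rcases hstep i hiL with ⟨h1, h2⟩ | ⟨h0', h1, h2⟩
    · rw [h1]
      exact DEdge_intro_t (by omega) (h2.trans hdir)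
    · rw [h1]
      have h2' : dAt (pathDirs (g e) (fun i => g (s i)))
          (Phi (Sof e s) (Sof (g e) (fun i => g (s i))) i - 1) = false := by
        rw [show dAt (QDirs n (Sof e s)) i = true from hdir] at h2
        exact h2
      have hE' := DEdge_intro_f (d := g e) (t := fun i => g (s i)) (ht := hg s hs)
        (by omega : Phi (Sof e s) (Sof (g e) (fun i => g (s i))) i - 1
          < (pathDirs (g e) (fun i => g (s i))).length) h2'
      rw [show Phi (Sof e s) (Sof (g e) (fun i => g (s i))) i - 1 + 1
          = Phi (Sof e s) (Sof (g e) (fun i => g (s i))) i by omega] at hE'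
      exact hE'
  · subst ha; subst hb
    rw [hwalk i (by omega), hwalk (i+1) (by omega)]
    rcases hstep i hiL with ⟨h1, h2⟩ | ⟨h0', h1, h2⟩
    · rw [h1]
      exact DEdge_intro_f (by omega) (h2.trans hdir)
    · rw [h1]
      have h2' : dAt (pathDirs (g e) (fun i => g (s i)))
          (Phi (Sof e s) (Sof (g e) (fun i => g (s i))) i - 1) = true := by
        rw [show dAt (QDirs n (Sof e s)) i = false from hdir] at h2
        exact h2
      have hE' := DEdge_intro_t (d := g e) (t := fun i => g (s i)) (ht := hg s hs)
        (by omega : Phi (Sof e s) (Sof (g e) (fun i => g (s i))) i - 1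
          < (pathDirs (g e) (fun i => g (s i))).length) h2'
      rw [show Phi (Sof e s) (Sof (g e) (fun i => g (s i))) i - 1 + 1
          = Phi (Sof e s) (Sof (g e) (fun i => g (s i))) i by omega] at hE'
      exact hE'

/-- The restriction of an endomorphism to the base vertices. -/
def resFun (h : DVert D n R → DVert D n R) (e : D) : D :=
  match h (Sum.inl e) with
  | Sum.inl e' => e'
  | _ => e

lemma resFun_spec {h : DVert D n R → DVert D n R} (hlev : ∀ v, Lv (h v) = Lv v) (e : D) :
    h (Sum.inl e) = Sum.inl (resFun h e) := by
  obtain ⟨e', he'⟩ := hom_inl_img hlev e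
  rw [he']
  unfold resFun
  rw [he']

lemma resFun_hExt (g : D → D) (hg : IsUnaryPolymorphism R g) (e : D) :
    resFun (hExt g hg) e = g e := rfl

/-- Componentwise action on the top vertices. -/
lemma hom_top_val {h : DVert D n R → DVert D n R} (hh : IsDigraphHom DEdge DEdge h)
    (hlev : ∀ v, Lv (h v) = Lv v) (t' s'' : {x : Fin n → D // x ∈ R})
    (hs'' : h (Sum.inr (Sum.inl t')) = Sum.inr (Sum.inl s'')) :
    s''.1 = fun i => resFun h (t'.1 i) := by
  funext i
  have hd' := resFun_spec hlev (t'.1 i)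
  have ht'' : h (Sum.inr (Sum.inl (⟨t'.1, t'.2⟩ : {x : Fin n → D // x ∈ R})))
      = Sum.inr (Sum.inl s'') := hs''
  obtain ⟨ψ, hψ0, hstep, hwalk⟩ := walk_main hh hlev (t'.1 i) t'.1 t'.2 hd' ht''
  have hgood := main2 hψ0 hstep (off (Sof (t'.1 i) t'.1) n + 1) (le_refl _)
  obtain ⟨_, hincl⟩ := good_top hgood
  have hmem : (⟨i.1, i.2⟩ : Fin n) ∈ Sof (t'.1 i) t'.1 := by
    rw [mem_Sof]
  have hmem' := hincl i.1 i.2 i.2 hmem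
  rw [mem_Sof] at hmem'
  exact hmem'.symm
end Ext

end DRel

open DRel

/-- every endomorphism of `𝒟(R)` maps `D` into `D` and `R` into `R`, its
restriction to `D` is a unary polymorphism of `R`, the restriction map is a bijection
between endomorphisms of `𝒟(R)` and unary polymorphisms of `R`, and an endomorphism
acts on `R` componentwise via its restriction to `D`. -/
theorem endo_unaryPoly_correspondence {D : Type} [Fintype D] [DecidableEq D] {n : ℕ}
    (hn : 1 ≤ n) (R : Set (Fin n → D)) (hR : R.Nonempty) :
    (∀ h : DVert D n R → DVert D n R, IsDigraphHom DEdge DEdge h →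
      (∀ d : D, ∃ d' : D, h (Sum.inl d) = Sum.inl d') ∧
      (∀ t : {t : Fin n → D // t ∈ R}, ∃ t' : {t : Fin n → D // t ∈ R},
        h (Sum.inr (Sum.inl t)) = Sum.inr (Sum.inl t'))) ∧
    ∃ res : {h : DVert D n R → DVert D n R // IsDigraphHom DEdge DEdge h} →
        {g : D → D // IsUnaryPolymorphism R g},
      Function.Bijective res ∧
      (∀ (h : {h : DVert D n R → DVert D n R // IsDigraphHom DEdge DEdge h}) (d : D),
        h.1 (Sum.inl d) = Sum.inl ((res h).1 d)) ∧
      (∀ (h : {h : DVert D n R → DVert D n R // IsDigraphHom DEdge DEdge h})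
          (t : {t : Fin n → D // t ∈ R}),
        h.1 (Sum.inr (Sum.inl t)) =
          Sum.inr (Sum.inl ⟨fun s => (res h).1 (t.1 s), (res h).2 t.1 t.2⟩)) := by
  classical
  obtain ⟨t₀, ht₀⟩ := hR
  have hlevOf : ∀ h : DVert D n R → DVert D n R, IsDigraphHom DEdge DEdge h →
      ∀ v, Lv (h v) = Lv v := fun h hh => hom_Lv hh (t₀ ⟨0, hn⟩) ht₀
  constructor
  · intro h hh
    have hlev := hlevOf h hh
    exact ⟨fun d => hom_inl_img hlev d, fun t => hom_top_img hlev t⟩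
  · have hpoly : ∀ h : {h : DVert D n R → DVert D n R // IsDigraphHom DEdge DEdge h},
        IsUnaryPolymorphism R (resFun h.1) := by
      intro h t ht
      have hlev := hlevOf h.1 h.2
      obtain ⟨s'', hs''⟩ := hom_top_img hlev ⟨t, ht⟩
      have hval := hom_top_val h.2 hlev ⟨t, ht⟩ s'' hs''
      rw [← hval]
      exact s''.2
    refine ⟨fun h => ⟨resFun h.1, hpoly h⟩, ⟨?_, ?_⟩, ?_, ?_⟩
    · -- injectivity
      intro h₁ h₂ hres
      have hg : resFun h₁.1 = resFun h₂.1 := congrArg Subtype.val hres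
      have hlev₁ := hlevOf h₁.1 h₁.2
      have hlev₂ := hlevOf h₂.1 h₂.2
      have htop : ∀ t' : {x : Fin n → D // x ∈ R},
          h₁.1 (Sum.inr (Sum.inl t')) = h₂.1 (Sum.inr (Sum.inl t')) := by
        intro t'
        obtain ⟨s₁, hs₁⟩ := hom_top_img hlev₁ t'
        obtain ⟨s₂, hs₂⟩ := hom_top_img hlev₂ t'
        have hv₁ := hom_top_val h₁.2 hlev₁ t' s₁ hs₁
        have hv₂ := hom_top_val h₂.2 hlev₂ t' s₂ hs₂
        rw [hs₁, hs₂]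
        exact congrArg (fun x => Sum.inr (Sum.inl x))
          (Subtype.ext ((hv₁.trans (by rw [hg])).trans hv₂.symm))
      apply Subtype.ext
      funext v
      rcases v with e | t' | iv
      · rw [resFun_spec hlev₁, resFun_spec hlev₂, hg]
      · exact htop t'
      · obtain ⟨s₁, hs₁⟩ := hom_top_img hlev₁ (⟨iv.r, iv.hr⟩ : {x : Fin n → D // x ∈ R})
        have hs₂ : h₂.1 (Sum.inr (Sum.inl (⟨iv.r, iv.hr⟩ : {x : Fin n → D // x ∈ R})))
            = Sum.inr (Sum.inl s₁) := by
          rw [← htop ⟨iv.r, iv.hr⟩]; exact hs₁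
        have hd₁ := resFun_spec hlev₁ iv.d
        have hd₂ : h₂.1 (Sum.inl iv.d) = Sum.inl (resFun h₁.1 iv.d) := by
          rw [resFun_spec hlev₂, hg]
        obtain ⟨ψ₁, hψ₁0, hstep₁, hwalk₁⟩ := walk_main h₁.2 hlev₁ iv.d iv.r iv.hr hd₁ hs₁
        obtain ⟨ψ₂, hψ₂0, hstep₂, hwalk₂⟩ := walk_main h₂.2 hlev₂ iv.d iv.r iv.hr hd₂ hs₂
        have hjle : iv.j ≤ off (Sof iv.d iv.r) n + 1 := by
          have h1 := iv.hjlen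
          have h2 := length_pathDirs iv.d iv.r
          omega
        have hψeq : ψ₁ iv.j = ψ₂ iv.j :=
          good_unique (main2 hψ₁0 hstep₁ iv.j hjle) (main2 hψ₂0 hstep₂ iv.j hjle)
        have hpv : pathVert iv.d iv.r iv.hr iv.j = Sum.inr (Sum.inr iv) := by
          rw [pathVert_of_lt iv.hj0 iv.hjlen]
        rw [← hpv, hwalk₁ iv.j hjle, hwalk₂ iv.j hjle, hψeq]
    · -- surjectivity
      intro g
      refine ⟨⟨hExt g.1 g.2, hExt_hom g.1 g.2⟩, ?_⟩
      apply Subtype.ext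
      funext e
      exact resFun_hExt g.1 g.2 e
    · intro h d
      exact resFun_spec (hlevOf h.1 h.2) d
    · intro h t
      have hlev := hlevOf h.1 h.2
      obtain ⟨s'', hs''⟩ := hom_top_img hlev t
      have hval := hom_top_val h.2 hlev t s'' hs''
      rw [hs'']
      exact congrArg (fun x => Sum.inr (Sum.inl x)) (Subtype.ext hval)
end

section
/- Let D be a finite set, R ⊆ D^n a nonempty n-ary relation, and 𝒟 = 𝒟(R) the digraph constructed from R. A vertex v of 𝒟 is the image of the initial vertex of the oriented path Q_∅ under some digraph homomorphism from Q_∅ to 𝒟 if and only if v ∈ D. -/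
open scoped NNRat

namespace DProof

/-! ### Height function on direction lists -/

def hgt (l : List Bool) : ℤ := (l.map fun b => if b then 1 else -1).sum

lemma hgt_nil : hgt [] = 0 := rfl

lemma hgt_append (a b : List Bool) : hgt (a ++ b) = hgt a + hgt b := by
  simp [hgt]

lemma hgt_cons (b : Bool) (l : List Bool) :
    hgt (b :: l) = (if b then 1 else -1) + hgt l := by
  simp [hgt]

lemma hgt_take_succ (l : List Bool) (i : ℕ) (hi : i < l.length) :
    hgt (l.take (i+1)) = hgt (l.take i) + (if l.get ⟨i, hi⟩ then 1 else -1) := by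
  rw [List.take_succ, hgt_append, List.getElem?_eq_getElem hi]
  simp [hgt]

/-- All prefix heights lie in `[0, m]` and the total height is `m`. -/
def ok (L : List Bool) (m : ℤ) : Prop :=
  hgt L = m ∧ ∀ j, 0 ≤ hgt (L.take j) ∧ hgt (L.take j) ≤ m

lemma ok_nonneg {L m} (h : ok L m) : 0 ≤ m := by
  have h2 := (h.2 L.length).1
  rwa [List.take_length, h.1] at h2

lemma ok_single : ok [true] 1 := by
  refine ⟨rfl, fun j => ?_⟩
  cases j with
  | zero => simp [hgt]
  | succ k => simp [hgt, List.take_succ_cons]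

lemma ok_zz : ok [true, false, true] 1 := by
  refine ⟨rfl, fun j => ?_⟩
  rcases j with _ | _ | _ | k <;>
    simp [hgt, List.take_succ_cons]

lemma ok_append {A B : List Bool} {m1 m2 : ℤ} (h1 : ok A m1) (h2 : ok B m2) :
    ok (A ++ B) (m1 + m2) := by
  refine ⟨by rw [hgt_append, h1.1, h2.1], fun j => ?_⟩
  rw [List.take_append, hgt_append]
  have hA := h1.2 j
  have hB := h2.2 (j - A.length)
  exact ⟨by linarith [hA.1, hB.1], by linarith [hA.2, hB.2]⟩

lemma ok_flatMap {α : Type*} (f : α → List Bool) (hf : ∀ x, ok (f x) 1) :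
    ∀ L : List α, ok (L.flatMap f) (L.length : ℤ)
  | [] => by
      refine ⟨rfl, fun j => ?_⟩
      simp [hgt]
  | a :: L => by
      have h := ok_append (hf a) (ok_flatMap f hf L)
      rw [← List.flatMap_cons] at h
      have : (1 : ℤ) + (L.length : ℤ) = ((a :: L).length : ℤ) := by
        simp; ring
      rwa [this] at h

lemma ok_QDirs (n : ℕ) (S : Finset (Fin n)) : ok (QDirs n S) ((n : ℤ) + 2) := by
  have hbody : ok (((List.finRange n).flatMap fun l =>
      if l ∈ S then [true] else [true, false, true]) ++ [true]) ((n : ℤ) + 1) := by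
    have h1 := ok_flatMap (fun l => if l ∈ S then [true] else [true, false, true])
      (fun x => by by_cases h : x ∈ S <;> simp [h, ok_single, ok_zz]) (List.finRange n)
    rw [List.length_finRange] at h1
    exact ok_append h1 ok_single
  have h := ok_append ok_single hbody
  have : (1 : ℤ) + ((n : ℤ) + 1) = (n : ℤ) + 2 := by ring
  rw [this] at h
  exact h

lemma one_le_hgt_take_QDirs (n : ℕ) (S : Finset (Fin n)) {j : ℕ} (hj : 1 ≤ j) :
    1 ≤ hgt ((QDirs n S).take j) := by
  obtain ⟨k, rfl⟩ : ∃ k, j = k + 1 := ⟨j - 1, by omega⟩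
  rw [QDirs, List.take_succ_cons, hgt_cons, if_pos rfl]
  have hbody : ok (((List.finRange n).flatMap fun l =>
      if l ∈ S then [true] else [true, false, true]) ++ [true]) ((n : ℤ) + 1) := by
    have h1 := ok_flatMap (fun l => if l ∈ S then [true] else [true, false, true])
      (fun x => by by_cases h : x ∈ S <;> simp [h, ok_single, ok_zz]) (List.finRange n)
    rw [List.length_finRange] at h1
    exact ok_append h1 ok_single
  linarith [(hbody.2 k).1]

lemma QDirs_length_pos (n : ℕ) (S : Finset (Fin n)) : 0 < (QDirs n S).length := by
  simp [QDirs]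

/-! ### Levels of vertices of `𝒟(R)` -/

variable {D : Type} [DecidableEq D] {n : ℕ} {R : Set (Fin n → D)}

lemma pathDirs_def (d : D) (t : Fin n → D) :
    pathDirs d t = QDirs n (Finset.univ.filter fun i => d = t i) := rfl

def lvl : DVert D n R → ℤ
  | Sum.inl _ => 0
  | Sum.inr (Sum.inl _) => (n : ℤ) + 2
  | Sum.inr (Sum.inr w) => hgt ((pathDirs w.d w.r).take w.j)

lemma hgt_pathDirs (d : D) (t : Fin n → D) : hgt (pathDirs d t) = (n : ℤ) + 2 :=
  (ok_QDirs n _).1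

lemma lvl_pathVert (d : D) (t : Fin n → D) (htR : t ∈ R) (j : ℕ)
    (hj : j ≤ (pathDirs d t).length) :
    lvl (pathVert d t htR j) = hgt ((pathDirs d t).take j) := by
  by_cases h0 : j = 0
  · subst h0; rw [show pathVert d t htR 0 = Sum.inl d from dif_pos rfl]; simp [lvl, hgt]
  by_cases hl : (pathDirs d t).length ≤ j
  · rw [show pathVert d t htR j = Sum.inr (Sum.inl ⟨t, htR⟩) from (dif_neg h0).trans (dif_pos hl)]
    have hje : j = (pathDirs d t).length := le_antisymm hj hl
    subst hje
    rw [List.take_length, hgt_pathDirs]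
    rfl
  · rw [show pathVert d t htR j = Sum.inr (Sum.inr ⟨d, t, htR, j, Nat.pos_of_ne_zero h0, not_le.mp hl⟩)
      from (dif_neg h0).trans (dif_neg hl)]
    rfl

lemma lvl_DEdge {a b : DVert D n R} (h : DEdge a b) : lvl b = lvl a + 1 := by
  obtain ⟨d, t, htR, i, hi, hcond⟩ := h
  by_cases hdir : (pathDirs d t).get ⟨i, hi⟩ = true
  · rw [if_pos hdir] at hcond
    obtain ⟨rfl, rfl⟩ := hcond
    rw [lvl_pathVert d t htR i (le_of_lt hi), lvl_pathVert d t htR (i+1) hi,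
      hgt_take_succ _ i hi, hdir]
    simp
  · rw [if_neg hdir] at hcond
    obtain ⟨rfl, rfl⟩ := hcond
    rw [lvl_pathVert d t htR i (le_of_lt hi), lvl_pathVert d t htR (i+1) hi,
      hgt_take_succ _ i hi]
    rw [Bool.not_eq_true] at hdir
    rw [hdir]
    simp

lemma lvl_le (v : DVert D n R) : lvl v ≤ (n : ℤ) + 2 := by
  match v with
  | Sum.inl _ => show (0:ℤ) ≤ (n:ℤ) + 2; omega
  | Sum.inr (Sum.inl _) => exact le_refl _
  | Sum.inr (Sum.inr w) =>
      show hgt ((pathDirs w.d w.r).take w.j) ≤ _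
      rw [pathDirs_def]
      exact ((ok_QDirs n _).2 w.j).2

lemma one_le_lvl_inr (x : {t : Fin n → D // t ∈ R} ⊕ InnerVert D n R) :
    1 ≤ lvl (Sum.inr x : DVert D n R) := by
  match x with
  | Sum.inl _ => show (1:ℤ) ≤ (n:ℤ) + 2; omega
  | Sum.inr w =>
      show (1:ℤ) ≤ hgt ((pathDirs w.d w.r).take w.j)
      rw [pathDirs_def]
      exact one_le_hgt_take_QDirs n _ w.hj0

/-! ### Walks along direction lists -/

def Walk {V : Type*} (E : V → V → Prop) : List Bool → V → V → Prop
  | [], u, w => u = w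
  | b :: ds, u, w => ∃ x, (if b then E u x else E x u) ∧ Walk E ds x w

lemma walk_append {V : Type*} {E : V → V → Prop} :
    ∀ (A B : List Bool) (u w : V),
      Walk E (A ++ B) u w ↔ ∃ m, Walk E A u m ∧ Walk E B m w
  | [], B, u, w => by
      constructor
      · intro h; exact ⟨u, rfl, h⟩
      · rintro ⟨m, rfl, h⟩; exact h
  | b :: A, B, u, w => by
      constructor
      · rintro ⟨x, hx, h⟩
        obtain ⟨m, h1, h2⟩ := (walk_append A B x w).1 h
        exact ⟨m, ⟨x, hx, h1⟩, h2⟩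
      · rintro ⟨m, ⟨x, hx, h1⟩, h2⟩
        exact ⟨x, hx, (walk_append A B x w).2 ⟨m, h1, h2⟩⟩

lemma walk_single {V : Type*} {E : V → V → Prop} {u w : V} (h : E u w) :
    Walk E [true] u w := ⟨w, by simpa using h, rfl⟩

lemma walk_zz_of_edge {V : Type*} {E : V → V → Prop} {u w : V} (h : E u w) :
    Walk E [true, false, true] u w :=
  ⟨w, by simpa using h, u, by simpa using h, w, by simpa using h, rfl⟩

lemma walk_fold {V : Type*} {E : V → V → Prop} {α : Type*} (f : α → List Bool)
    (hf : ∀ x, f x = [true] ∨ f x = [true, false, true]) :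
    ∀ (L : List α) (u w : V), Walk E (L.flatMap f) u w →
      Walk E (L.flatMap fun _ => [true, false, true]) u w
  | [], u, w => fun h => h
  | a :: L, u, w => by
      intro h
      rw [List.flatMap_cons] at h ⊢
      rw [walk_append] at h ⊢
      obtain ⟨m, h1, h2⟩ := h
      refine ⟨m, ?_, walk_fold f hf L m w h2⟩
      rcases hf a with he | he <;> rw [he] at h1
      · obtain ⟨x, hx, hxm⟩ := h1
        cases hxm
        exact walk_zz_of_edge (by simpa using hx)
      · exact h1

lemma walk_of_pathlike {V : Type*} {E : V → V → Prop} :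
    ∀ (ds : List Bool) (P : ℕ → V),
      (∀ i (hi : i < ds.length),
        if ds.get ⟨i, hi⟩ = true then E (P i) (P (i+1)) else E (P (i+1)) (P i)) →
      Walk E ds (P 0) (P ds.length)
  | [], P, _ => rfl
  | b :: ds, P, hP => by
      refine ⟨P 1, ?_, ?_⟩
      · have := hP 0 (by simp)
        simpa using this
      · have h := walk_of_pathlike ds (fun k => P (k+1)) (fun i hi => by
          have := hP (i+1) (by simpa using Nat.succ_lt_succ hi)
          simpa using this)
        simpa using h

lemma g_of_walk {V : Type*} {E : V → V → Prop} :
    ∀ (ds : List Bool) (u w : V), Walk E ds u w →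
      ∃ g : ℕ → V, g 0 = u ∧ ∀ i (hi : i < ds.length),
        if ds.get ⟨i, hi⟩ = true then E (g i) (g (i+1)) else E (g (i+1)) (g i)
  | [], u, w, _ => ⟨fun _ => u, rfl, fun i hi => by simp at hi⟩
  | b :: ds, u, w, h => by
      obtain ⟨x, hx, hw⟩ := h
      obtain ⟨g, hg0, hg⟩ := g_of_walk ds x w hw
      refine ⟨fun k => match k with | 0 => u | k + 1 => g k, rfl, ?_⟩
      intro i hi
      match i with
      | 0 =>
        have h0 : (b :: ds).get ⟨0, hi⟩ = b := rfl
        rw [h0]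
        show if b = true then E u (g 0) else E (g 0) u
        rw [hg0]
        exact hx
      | i + 1 =>
        have hi' : i < ds.length := by simpa using hi
        have h1 : (b :: ds).get ⟨i+1, hi⟩ = ds.get ⟨i, hi'⟩ := rfl
        rw [h1]
        exact hg i hi'

lemma hom_of_walk {V : Type*} {E : V → V → Prop} {ds : List Bool} {u w : V}
    (h : Walk E ds u w) :
    ∃ h' : Fin (ds.length + 1) → V, IsDigraphHom (pathEdge ds) E h' ∧ h' 0 = u := by
  obtain ⟨g, hg0, hg⟩ := g_of_walk ds u w h
  refine ⟨fun k => g k.val, ?_, by simpa using hg0⟩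
  rintro a b ⟨i, hcond⟩
  have hP := hg i.val i.isLt
  rw [Fin.eta] at hP
  by_cases hdir : ds.get i = true
  · rw [if_pos hdir] at hcond hP
    obtain ⟨rfl, rfl⟩ := hcond
    exact hP
  · rw [if_neg hdir] at hcond hP
    obtain ⟨rfl, rfl⟩ := hcond
    exact hP

/-! ### The path from `d` to `t` in `𝒟(R)` is a walk -/

lemma dedge_true (d : D) (t : Fin n → D) (htR : t ∈ R) (i : ℕ)
    (hi : i < (pathDirs d t).length) (hdir : (pathDirs d t).get ⟨i, hi⟩ = true) :
    DEdge (pathVert d t htR i) (pathVert d t htR (i+1)) :=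
  ⟨d, t, htR, i, hi, by rw [if_pos hdir]; exact ⟨rfl, rfl⟩⟩

lemma dedge_false (d : D) (t : Fin n → D) (htR : t ∈ R) (i : ℕ)
    (hi : i < (pathDirs d t).length) (hdir : ¬ (pathDirs d t).get ⟨i, hi⟩ = true) :
    DEdge (pathVert d t htR (i+1)) (pathVert d t htR i) :=
  ⟨d, t, htR, i, hi, by rw [if_neg hdir]; exact ⟨rfl, rfl⟩⟩

lemma walk_pathDirs (d : D) (t : Fin n → D) (htR : t ∈ R) :
    Walk DEdge (pathDirs d t) (Sum.inl d : DVert D n R) (Sum.inr (Sum.inl ⟨t, htR⟩)) := by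
  have h0 : pathVert d t htR 0 = Sum.inl d := by simp [pathVert]; rfl
  have hl : pathVert d t htR (pathDirs d t).length = Sum.inr (Sum.inl ⟨t, htR⟩) := by
    have hpos : ¬ (pathDirs d t).length = 0 := by
      have := QDirs_length_pos n (Finset.univ.filter fun i => d = t i)
      rw [pathDirs_def]
      omega
    exact (dif_neg hpos).trans (dif_pos le_rfl)
  rw [← h0, ← hl]
  exact walk_of_pathlike (pathDirs d t) (pathVert d t htR) (fun i hi => by
    split_ifs with hdir
    · exact dedge_true d t htR i hi hdir
    · exact dedge_false d t htR i hi hdir)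

end DProof

/-- a vertex of `𝒟(R)` is the image of the initial vertex of `Q_∅`
under a homomorphism `Q_∅ → 𝒟(R)` iff it is a base vertex (an element of `D`). -/
theorem image_initial_Qempty_iff_base {D : Type} [Fintype D] [DecidableEq D] {n : ℕ}
    (hn : 1 ≤ n) (R : Set (Fin n → D)) (hR : R.Nonempty) (v : DVert D n R) :
    (∃ h : Fin ((QDirs n ∅).length + 1) → DVert D n R,
        IsDigraphHom (pathEdge (QDirs n ∅)) DEdge h ∧ h 0 = v) ↔
      ∃ d : D, v = Sum.inl d := by
  classical
  constructor
  · rintro ⟨h, hhom, h0⟩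
    cases v with
    | inl d => exact ⟨d, rfl⟩
    | inr x =>
      exfalso
      have key : ∀ k (hk : k ≤ (QDirs n ∅).length),
          DProof.lvl (h ⟨k, by omega⟩) = DProof.lvl (h 0) + DProof.hgt ((QDirs n ∅).take k) := by
        intro k
        induction k with
        | zero =>
          intro _
          have h00 : (0 : Fin ((QDirs n ∅).length + 1)) = ⟨0, by omega⟩ := by
            apply Fin.ext; simp
          rw [← h00]
          simp [DProof.hgt]
        | succ k ih =>
          intro hk
          have hk' : k < (QDirs n ∅).length := hk
          have hkk := ih (le_of_lt hk')
          by_cases hdir : (QDirs n ∅).get ⟨k, hk'⟩ = true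
          · have hedge : pathEdge (QDirs n ∅) ⟨k, by omega⟩ ⟨k + 1, by omega⟩ :=
              ⟨⟨k, hk'⟩, by rw [if_pos hdir]; exact ⟨Fin.ext rfl, Fin.ext rfl⟩⟩
            have hstep := DProof.lvl_DEdge (hhom _ _ hedge)
            rw [hstep, hkk, DProof.hgt_take_succ (QDirs n ∅) k hk', hdir]
            simp
            ring
          · have hedge : pathEdge (QDirs n ∅) ⟨k + 1, by omega⟩ ⟨k, by omega⟩ :=
              ⟨⟨k, hk'⟩, by rw [if_neg hdir]; exact ⟨Fin.ext rfl, Fin.ext rfl⟩⟩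
            have hstep := DProof.lvl_DEdge (hhom _ _ hedge)
            rw [DProof.hgt_take_succ (QDirs n ∅) k hk', if_neg hdir]
            rw [hkk] at hstep
            linarith
      have hend := key (QDirs n ∅).length le_rfl
      rw [List.take_length] at hend
      have hLval : DProof.hgt (QDirs n ∅) = (n : ℤ) + 2 := (DProof.ok_QDirs n ∅).1
      have h1 := DProof.lvl_le (h ⟨(QDirs n ∅).length, by omega⟩)
      have h2 : (1 : ℤ) ≤ DProof.lvl (Sum.inr x : DVert D n R) := DProof.one_le_lvl_inr x
      rw [h0, hLval] at hend
      linarith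
  · rintro ⟨d, rfl⟩
    obtain ⟨t, htR⟩ := hR
    have hw := DProof.walk_pathDirs (R := R) d t htR
    rw [DProof.pathDirs_def, QDirs] at hw
    obtain ⟨x1, hx1, hw2⟩ := hw
    have hw2 := (DProof.walk_append _ _ _ _).1 hw2
    obtain ⟨m, hbody, hlast⟩ := hw2
    have hbody' := DProof.walk_fold
      (fun l => if l ∈ (Finset.univ.filter fun i => d = t i) then [true] else [true, false, true])
      (fun l => by by_cases hl : l ∈ (Finset.univ.filter fun i => d = t i) <;> simp [hl])
      (List.finRange n) _ _ hbody
    have hQ : QDirs n (∅ : Finset (Fin n)) =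
        true :: (((List.finRange n).flatMap fun _ => [true, false, true]) ++ [true]) := by
      simp [QDirs]
    have hw' : DProof.Walk DEdge (QDirs n (∅ : Finset (Fin n)))
        (Sum.inl d : DVert D n R) (Sum.inr (Sum.inl ⟨t, htR⟩)) := by
      rw [hQ]
      exact ⟨x1, hx1, (DProof.walk_append _ _ _ _).2 ⟨m, hbody', hlast⟩⟩
    obtain ⟨h', hh, hh0⟩ := DProof.hom_of_walk hw'
    exact ⟨h', hh, hh0⟩
end
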